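/- arXiv:1611.04902 — 2 statements merged into one kernel-verified Lean document; each statement's English description precedes it below -/
import Mathlib

section
/- Let h ≤ 0 on V with h not identically zero. Then for every c < 0 the equation Δ_p u = c - h e^u has a solution u : V → ℝ. -/
open Finset Real Filter

/-- The discrete `p`-Laplacian on a weighted graph with adjacency `A`,
edge weights `ω` and vertex measure `μ`:
`(Δ_p f)_i = (1/μ_i) Σ_{j ∼ i} ω_{ij} |f_j - f_i|^{p-2} (f_j - f_i)`. -/
noncomputable def pLap {V : Type*} [Fintype V] (p : ℝ) (A : V → V → Prop) [DecidableRel A]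
    (ω : V → V → ℝ) (μ : V → ℝ) (f : V → ℝ) : V → ℝ :=
  fun i => (1 / μ i) * ∑ j, if A i j then ω i j * |f j - f i| ^ (p - 2) * (f j - f i) else 0

/-- Sum of a symmetric function `g` over the (unordered) edges of the graph:
`Σ_{i∼j} g_{ij} = (1/2) Σ_i Σ_{j : A i j} g i j`. -/
noncomputable def edgeSum {V : Type*} [Fintype V] (A : V → V → Prop) [DecidableRel A]
    (g : V → V → ℝ) : ℝ :=
  (1 / 2) * ∑ i, ∑ j, if A i j then g i j else 0

lemma aux18_hasDerivAt_abs_rpow {p : ℝ} (hp : 1 < p) (x : ℝ) :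
    HasDerivAt (fun y : ℝ => |y| ^ p) (p * |x| ^ (p - 2) * x) x := by
  rcases lt_trichotomy x 0 with hx | hx | hx
  · have hinner : HasDerivAt (fun y : ℝ => -y) (-1) x := (hasDerivAt_id x).neg
    have houter := Real.hasDerivAt_rpow_const (x := -x) (p := p) (Or.inl (by linarith))
    have h1 : HasDerivAt (fun y : ℝ => (-y) ^ p) (p * (-x) ^ (p - 1) * (-1)) x :=
      houter.comp x hinner
    have hev : (fun y : ℝ => |y| ^ p) =ᶠ[nhds x] fun y : ℝ => (-y) ^ p := by
      filter_upwards [Iio_mem_nhds hx] with y hy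
      rw [abs_of_neg hy]
    have h2 := h1.congr_of_eventuallyEq hev
    convert h2 using 1
    · rfl
    · rfl
    have hxpos : (0:ℝ) < -x := by linarith
    rw [abs_of_neg hx]
    rw [show p - 1 = (p - 2) + 1 by ring, Real.rpow_add hxpos, Real.rpow_one]
    ring
  · subst hx
    rw [abs_zero, mul_zero]
    rw [hasDerivAt_iff_tendsto_slope]
    have hbound : ∀ᶠ y in nhdsWithin (0:ℝ) {(0:ℝ)}ᶜ, ‖slope (fun y : ℝ => |y| ^ p) 0 y‖ ≤ |y| ^ (p - 1) := by
      filter_upwards [self_mem_nhdsWithin] with y hy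
      have hy' : y ≠ 0 := hy
      have : slope (fun y : ℝ => |y| ^ p) 0 y = |y| ^ p / y := by
        simp [slope_def_field, Real.zero_rpow (by positivity : p ≠ 0)]
      rw [this]
      rw [norm_div, Real.norm_eq_abs, Real.norm_eq_abs, abs_of_nonneg (Real.rpow_nonneg (abs_nonneg y) p)]
      rw [show p = (p - 1) + 1 by ring, Real.rpow_add (abs_pos.2 hy'), Real.rpow_one]
      rw [mul_div_assoc, div_self (by simpa using hy'), mul_one]
      simp
    have hlim : Tendsto (fun y : ℝ => |y| ^ (p - 1)) (nhdsWithin (0:ℝ) {(0:ℝ)}ᶜ) (nhds 0) := by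
      have hcont : ContinuousAt (fun y : ℝ => |y| ^ (p - 1)) 0 := by
        apply ContinuousAt.rpow_const (continuous_abs.continuousAt)
        right; linarith
      have h0 : |(0:ℝ)| ^ (p - 1) = 0 := by
        rw [abs_zero, Real.zero_rpow (by intro hq; apply absurd hq; intro hq2; linarith [sub_eq_zero.1 hq2] : p - 1 ≠ 0)]
      have ht := hcont.tendsto
      rw [h0] at ht
      exact tendsto_nhdsWithin_of_tendsto_nhds ht
    exact squeeze_zero_norm' hbound hlim
  · have houter := Real.hasDerivAt_rpow_const (x := x) (p := p) (Or.inl (ne_of_gt hx))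
    have hev : (fun y : ℝ => |y| ^ p) =ᶠ[nhds x] fun y : ℝ => y ^ p := by
      filter_upwards [Ioi_mem_nhds hx] with y hy
      rw [abs_of_pos hy]
    have h2 := houter.congr_of_eventuallyEq hev
    convert h2 using 1
    · rfl
    · rfl
    rw [abs_of_pos hx]
    rw [show p - 1 = (p - 2) + 1 by ring, Real.rpow_add hx, Real.rpow_one]
    ring

noncomputable def aux18_energy {V : Type*} [Fintype V] (p : ℝ) (A : V → V → Prop)
    [DecidableRel A] (ω : V → V → ℝ) (f : V → ℝ) : ℝ :=
  ∑ k, ∑ l, if A k l then ω k l * |f l - f k| ^ p else 0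

noncomputable def aux18_J {V : Type*} [Fintype V] (p : ℝ) (A : V → V → Prop)
    [DecidableRel A] (ω : V → V → ℝ) (μ h : V → ℝ) (c : ℝ) (f : V → ℝ) : ℝ :=
  (1 / (2 * p)) * aux18_energy p A ω f + ∑ k, μ k * (c * f k - h k * Real.exp (f k))

lemma aux18_hasDerivAt_J {V : Type*} [Fintype V] [DecidableEq V] (p : ℝ) (hp : 1 < p) (A : V → V → Prop)
    [DecidableRel A] (ω : V → V → ℝ) (μ h : V → ℝ) (c : ℝ) (u : V → ℝ) (i : V) :
    HasDerivAt (fun t => aux18_J p A ω μ h c (fun k => u k + t * (if k = i then (1:ℝ) else 0)))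
      ((1 / (2 * p)) * (∑ k, ∑ l, (if A k l then
          ω k l * (p * |u l - u k| ^ (p - 2) * (u l - u k)) else 0) *
          ((if l = i then (1:ℝ) else 0) - (if k = i then (1:ℝ) else 0)))
        + ∑ k, μ k * (c * (if k = i then (1:ℝ) else 0)
            - h k * Real.exp (u k) * (if k = i then (1:ℝ) else 0))) 0 := by
  have hterm : ∀ k l : V, HasDerivAt
      (fun t : ℝ => if A k l then
        ω k l * |(u l + t * (if l = i then (1:ℝ) else 0)) - (u k + t * (if k = i then (1:ℝ) else 0))| ^ p else 0)
      ((if A k l then ω k l * (p * |u l - u k| ^ (p - 2) * (u l - u k)) else 0) *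
        ((if l = i then (1:ℝ) else 0) - (if k = i then (1:ℝ) else 0))) 0 := by
    intro k l
    set s : ℝ := (if l = i then (1:ℝ) else 0) - (if k = i then (1:ℝ) else 0) with hs
    by_cases hA : A k l
    · simp only [hA, if_true]
      have hinner : HasDerivAt (fun t : ℝ => (u l - u k) + t * s) s 0 := by
        simpa using ((hasDerivAt_id (0:ℝ)).mul_const s).const_add (u l - u k)
      have houter := aux18_hasDerivAt_abs_rpow hp ((u l - u k) + 0 * s)
      have hcomp := houter.comp 0 hinner
      simp only [zero_mul, add_zero] at hcomp
      have heq : (fun t : ℝ => ω k l * |(u l + t * (if l = i then (1:ℝ) else 0)) - (u k + t * (if k = i then (1:ℝ) else 0))| ^ p)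
          = fun t : ℝ => ω k l * ((fun y : ℝ => |y| ^ p) ((u l - u k) + t * s)) := by
        funext t
        have : (u l + t * (if l = i then (1:ℝ) else 0)) - (u k + t * (if k = i then (1:ℝ) else 0))
            = (u l - u k) + t * s := by rw [hs]; ring
        rw [this]
      rw [heq]
      have := hcomp.const_mul (ω k l)
      convert this using 1
      · rfl
      · rfl
      · rfl
      ring
    · simp only [hA, if_false, zero_mul]
      exact hasDerivAt_const 0 0
  have hsum1 : HasDerivAt (fun t : ℝ => ∑ k, ∑ l, if A k l then
        ω k l * |(u l + t * (if l = i then (1:ℝ) else 0)) - (u k + t * (if k = i then (1:ℝ) else 0))| ^ p else 0)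
      (∑ k, ∑ l, (if A k l then ω k l * (p * |u l - u k| ^ (p - 2) * (u l - u k)) else 0) *
        ((if l = i then (1:ℝ) else 0) - (if k = i then (1:ℝ) else 0))) 0 := by
    apply HasDerivAt.fun_sum
    intro k _
    exact HasDerivAt.fun_sum (fun l _ => hterm k l)
  have hterm2 : ∀ k : V, HasDerivAt
      (fun t : ℝ => μ k * (c * (u k + t * (if k = i then (1:ℝ) else 0))
        - h k * Real.exp (u k + t * (if k = i then (1:ℝ) else 0))))
      (μ k * (c * (if k = i then (1:ℝ) else 0) - h k * Real.exp (u k) * (if k = i then (1:ℝ) else 0))) 0 := by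
    intro k
    set d : ℝ := (if k = i then (1:ℝ) else 0) with hd
    have hlin : HasDerivAt (fun t : ℝ => u k + t * d) d 0 := by
      simpa using ((hasDerivAt_id (0:ℝ)).mul_const d).const_add (u k)
    have hexp := hlin.exp
    simp only [zero_mul, add_zero] at hexp
    have := ((hlin.const_mul c).fun_sub (hexp.const_mul (h k))).const_mul (μ k)
    convert this using 1
    · rfl
    · rfl
    ring
  have hsum2 : HasDerivAt (fun t : ℝ => ∑ k, μ k * (c * (u k + t * (if k = i then (1:ℝ) else 0))
        - h k * Real.exp (u k + t * (if k = i then (1:ℝ) else 0))))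
      (∑ k, μ k * (c * (if k = i then (1:ℝ) else 0) - h k * Real.exp (u k) * (if k = i then (1:ℝ) else 0))) 0 :=
    HasDerivAt.fun_sum (fun k _ => hterm2 k)
  have := (hsum1.const_mul (1 / (2 * p))).fun_add hsum2
  simpa [aux18_J, aux18_energy] using this

lemma aux18_Dval {V : Type*} [Fintype V] [DecidableEq V] (p : ℝ) (hp : 1 < p)
    (A : V → V → Prop) [DecidableRel A] (hA : Symmetric A)
    (ω : V → V → ℝ) (hωsymm : ∀ i j, ω i j = ω j i)
    (μ : V → ℝ) (hμ : ∀ i, 0 < μ i) (u : V → ℝ) (i : V) :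
    (1 / (2 * p)) * (∑ k, ∑ l, (if A k l then
        ω k l * (p * |u l - u k| ^ (p - 2) * (u l - u k)) else 0) *
        ((if l = i then (1:ℝ) else 0) - (if k = i then (1:ℝ) else 0)))
      = -(μ i * pLap p A ω μ u i) := by
  set T : V → V → ℝ := fun k l => if A k l then
      ω k l * (p * |u l - u k| ^ (p - 2) * (u l - u k)) else 0 with hT
  have hskew : ∀ k l, T l k = -T k l := by
    intro k l
    by_cases hAkl : A k l
    · have hAlk : A l k := hA hAkl
      simp only [hT, hAkl, hAlk, if_true]
      rw [hωsymm l k, abs_sub_comm (u k) (u l)]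
      ring
    · have hAlk : ¬ A l k := fun hx => hAkl (hA hx)
      simp [hT, hAkl, hAlk]
  have hinner1 : ∀ k, (∑ l, T k l * (if l = i then (1:ℝ) else 0)) = T k i := by
    intro k
    simp [mul_ite, mul_one, mul_zero]
  have hsplit : (∑ k, ∑ l, T k l *
      ((if l = i then (1:ℝ) else 0) - (if k = i then (1:ℝ) else 0)))
      = (∑ k, T k i) - (∑ l, T i l) := by
    have : ∀ k, (∑ l, T k l *
        ((if l = i then (1:ℝ) else 0) - (if k = i then (1:ℝ) else 0)))
        = T k i - (∑ l, T k l) * (if k = i then (1:ℝ) else 0) := by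
      intro k
      rw [show (∑ l, T k l * ((if l = i then (1:ℝ) else 0) - (if k = i then (1:ℝ) else 0)))
        = (∑ l, T k l * (if l = i then (1:ℝ) else 0)) - (∑ l, T k l * (if k = i then (1:ℝ) else 0))
        by rw [← Finset.sum_sub_distrib]; exact Finset.sum_congr rfl fun l _ => by ring]
      rw [hinner1 k, ← Finset.sum_mul]
    rw [Finset.sum_congr rfl fun k _ => this k, Finset.sum_sub_distrib]
    congr 1
    simp [ite_mul, mul_one, mul_zero]
  have hneg : (∑ k, T k i) = -∑ l, T i l := by
    rw [← Finset.sum_neg_distrib]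
    exact Finset.sum_congr rfl fun k _ => by rw [hskew]
  have hTsum : (∑ l, T i l) = p * ∑ l, (if A i l then ω i l * |u l - u i| ^ (p - 2) * (u l - u i) else 0) := by
    rw [Finset.mul_sum]
    refine Finset.sum_congr rfl fun l _ => ?_
    by_cases hAil : A i l <;> simp [hT, hAil] <;> ring
  rw [hsplit, hneg, hTsum]
  simp only [pLap]
  have hp0 : p ≠ 0 := by positivity
  have hμ0 : μ i ≠ 0 := ne_of_gt (hμ i)
  field_simp
  ring

lemma aux18_energy_nonneg {V : Type*} [Fintype V] (p : ℝ) (A : V → V → Prop)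
    [DecidableRel A] (ω : V → V → ℝ) (hωpos : ∀ i j, A i j → 0 < ω i j) (f : V → ℝ) :
    0 ≤ aux18_energy p A ω f := by
  apply Finset.sum_nonneg
  intro k _
  apply Finset.sum_nonneg
  intro l _
  by_cases hAkl : A k l
  · simp only [hAkl, if_true]
    exact mul_nonneg (le_of_lt (hωpos k l hAkl)) (Real.rpow_nonneg (abs_nonneg _) p)
  · simp [hAkl]

lemma aux18_energy_cont {V : Type*} [Fintype V] (p : ℝ) (hp : 1 < p) (A : V → V → Prop)
    [DecidableRel A] (ω : V → V → ℝ) :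
    Continuous (aux18_energy p A ω) := by
  apply continuous_finset_sum
  intro k _
  apply continuous_finset_sum
  intro l _
  by_cases hAkl : A k l
  · simp only [hAkl, if_true]
    apply Continuous.mul continuous_const
    apply Continuous.rpow_const (((continuous_apply l).sub (continuous_apply k)).abs)
    intro f
    right; linarith
  · simp only [hAkl, if_false]
    exact continuous_const

lemma aux18_energy_smul {V : Type*} [Fintype V] (p : ℝ) (A : V → V → Prop)
    [DecidableRel A] (ω : V → V → ℝ) (t : ℝ) (f : V → ℝ) :
    aux18_energy p A ω (fun k => t * f k) = |t| ^ p * aux18_energy p A ω f := by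
  unfold aux18_energy
  rw [Finset.mul_sum]
  refine Finset.sum_congr rfl fun k _ => ?_
  rw [Finset.mul_sum]
  refine Finset.sum_congr rfl fun l _ => ?_
  by_cases hAkl : A k l
  · simp only [hAkl, if_true]
    rw [show t * f l - t * f k = t * (f l - f k) by ring, abs_mul,
      Real.mul_rpow (abs_nonneg t) (abs_nonneg _)]
    ring
  · simp [hAkl]

lemma aux18_poincare {V : Type*} [Fintype V] [Nonempty V] (p : ℝ) (hp : 1 < p)
    (A : V → V → Prop) [DecidableRel A]
    (ω : V → V → ℝ) (hωpos : ∀ i j, A i j → 0 < ω i j)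
    (hconn : ∀ i j : V, Relation.ReflTransGen A i j) (i0 : V) :
    ∃ ε > 0, ∀ v : V → ℝ, v i0 = 0 → ε * ‖v‖ ^ p ≤ aux18_energy p A ω v := by
  have hp0 : p ≠ 0 := by positivity
  have hEzero : ∀ v : V → ℝ, aux18_energy p A ω v = 0 → ∀ j, v j = v i0 := by
    intro v hE j
    have hterm : ∀ k l, A k l → v l = v k := by
      intro k l hAkl
      have h1 : ∀ k ∈ Finset.univ (α := V),
          (∑ l, if A k l then ω k l * |v l - v k| ^ p else 0) = 0 := by
        rw [← Finset.sum_eq_zero_iff_of_nonneg]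
        · exact hE
        · intro k _
          apply Finset.sum_nonneg
          intro l _
          by_cases hA' : A k l
          · simp only [hA', if_true]
            exact mul_nonneg (le_of_lt (hωpos k l hA')) (Real.rpow_nonneg (abs_nonneg _) p)
          · simp [hA']
      have h2 : ∀ l ∈ Finset.univ (α := V),
          (if A k l then ω k l * |v l - v k| ^ p else 0) = 0 := by
        rw [← Finset.sum_eq_zero_iff_of_nonneg]
        · exact h1 k (Finset.mem_univ k)
        · intro l _
          by_cases hA' : A k l
          · simp only [hA', if_true]
            exact mul_nonneg (le_of_lt (hωpos k l hA')) (Real.rpow_nonneg (abs_nonneg _) p)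
          · simp [hA']
      have h3 := h2 l (Finset.mem_univ l)
      rw [if_pos hAkl] at h3
      have h4 : |v l - v k| ^ p = 0 :=
        (mul_eq_zero.1 h3).resolve_left (ne_of_gt (hωpos k l hAkl))
      have h5 : |v l - v k| = 0 := by
        by_contra h6
        exact h6 (by
          have := Real.rpow_natCast (|v l - v k|) 1
          have h7 := (Real.rpow_eq_zero (abs_nonneg _) hp0).1 h4
          exact h7)
      have := abs_eq_zero.1 h5
      linarith [sub_eq_zero.1 this]
    have hind := hconn i0 j
    induction hind with
    | refl => rfl
    | tail hbc hedge ih => rw [hterm _ _ hedge, ih]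
  by_cases hS : ∃ v : V → ℝ, v i0 = 0 ∧ v ≠ 0
  · set S : Set (V → ℝ) := Metric.sphere 0 1 ∩ {v | v i0 = 0} with hSdef
    have hcomp : IsCompact S :=
      (isCompact_sphere (0 : V → ℝ) 1).inter_right
        (isClosed_eq (continuous_apply i0) continuous_const)
    have hSne : S.Nonempty := by
      obtain ⟨v, hv0, hvne⟩ := hS
      refine ⟨‖v‖⁻¹ • v, ?_, ?_⟩
      · simp only [Metric.mem_sphere, dist_zero_right]
        exact norm_smul_inv_norm hvne
      · simp [hv0]
    obtain ⟨w, hwS, hwmin⟩ := hcomp.exists_isMinOn hSne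
      (aux18_energy_cont p hp A ω).continuousOn
    set ε := aux18_energy p A ω w with hε
    have hεpos : 0 < ε := by
      rcases lt_or_eq_of_le (aux18_energy_nonneg p A ω hωpos w) with h' | h'
      · exact h'
      · exfalso
        have hconst := hEzero w h'.symm
        have hw0 : w = 0 := by
          funext j
          rw [hconst j, hwS.2]
          rfl
        have : ‖w‖ = 1 := by
          have := hwS.1
          simpa [Metric.mem_sphere, dist_zero_right] using this
        rw [hw0] at this
        simp at this
    refine ⟨ε, hεpos, ?_⟩
    intro v hv0
    by_cases hvne : v = 0
    · subst hvne
      simp [Real.zero_rpow hp0]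
      exact aux18_energy_nonneg p A ω hωpos 0
    · have hnv : (0:ℝ) < ‖v‖ := norm_pos_iff.2 hvne
      set w' : V → ℝ := ‖v‖⁻¹ • v with hw'
      have hw'S : w' ∈ S := by
        constructor
        · simp only [Metric.mem_sphere, dist_zero_right]
          exact norm_smul_inv_norm hvne
        · simp [hw', hv0]
      have hEv : aux18_energy p A ω v = ‖v‖ ^ p * aux18_energy p A ω w' := by
        have : v = fun k => ‖v‖ * w' k := by
          funext k
          simp [hw', smul_eq_mul]
          rw [← mul_assoc, mul_inv_cancel₀ (ne_of_gt hnv), one_mul]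
        conv_lhs => rw [this]
        rw [aux18_energy_smul, abs_of_pos hnv]
      rw [hEv]
      have h1 : ε ≤ aux18_energy p A ω w' := hwmin hw'S
      have h2 : (0:ℝ) ≤ ‖v‖ ^ p := Real.rpow_nonneg (le_of_lt hnv) p
      calc ε * ‖v‖ ^ p ≤ aux18_energy p A ω w' * ‖v‖ ^ p :=
            mul_le_mul_of_nonneg_right h1 h2
        _ = ‖v‖ ^ p * aux18_energy p A ω w' := by ring
  · push_neg at hS
    refine ⟨1, one_pos, ?_⟩
    intro v hv0
    rw [hS v hv0]
    simp [Real.zero_rpow hp0]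
    exact aux18_energy_nonneg p A ω hωpos 0

lemma aux18_sq_le_exp {a : ℝ} (ha : 0 ≤ a) : a ^ 2 / 4 ≤ Real.exp a := by
  have h2 : Real.exp a = Real.exp (a / 2) * Real.exp (a / 2) := by
    rw [← Real.exp_add]; ring_nf
  nlinarith [Real.add_one_le_exp (a / 2), (Real.exp_pos (a / 2)).le]

lemma aux18_g_lb {K β : ℝ} (hK : 0 < K) (hβ : 0 < β) (a : ℝ) :
    -(K ^ 2 / β) ≤ β * Real.exp a - K * a := by
  rcases le_or_gt a 0 with ha | ha
  · have h1 := (Real.exp_pos a).le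
    have h2 : 0 ≤ K ^ 2 / β := by positivity
    nlinarith
  · have hq := aux18_sq_le_exp ha.le
    rw [show -(K ^ 2 / β) = (-K ^ 2) / β by ring, div_le_iff₀ hβ]
    nlinarith [sq_nonneg (β * a / 2 - K), mul_le_mul_of_nonneg_left hq hβ.le]

lemma aux18_g_top {K β : ℝ} (hK : 0 < K) (hβ : 0 < β) (S : ℝ) :
    ∃ Ra : ℝ, ∀ a : ℝ, Ra ≤ |a| → S ≤ β * Real.exp a - K * a := by
  refine ⟨max ((|S| + 1) / K) (max (4 * (K + 1) / β) (|S| + 1)), fun a hRa => ?_⟩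
  rcases le_or_gt a 0 with ha | ha
  · have h1 : (|S| + 1) / K ≤ |a| := le_trans (le_max_left _ _) hRa
    have h2 : |S| + 1 ≤ |a| * K := (div_le_iff₀ hK).1 h1
    have h3 : |a| = -a := abs_of_nonpos ha
    have h4 := (Real.exp_pos a).le
    have h5 := le_abs_self S
    nlinarith
  · have h3 : |a| = a := abs_of_pos ha
    have h1 : 4 * (K + 1) / β ≤ a := by
      rw [← h3]; exact le_trans (le_trans (le_max_left _ _) (le_max_right _ _)) hRa
    have h2 : |S| + 1 ≤ a := by
      rw [← h3]; exact le_trans (le_trans (le_max_right _ _) (le_max_right _ _)) hRa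
    have h6 : 4 * (K + 1) ≤ β * a := by
      rw [div_le_iff₀ hβ] at h1; linarith
    have hq := aux18_sq_le_exp ha.le
    have h5 := le_abs_self S
    nlinarith [mul_le_mul_of_nonneg_left hq hβ.le, mul_le_mul_of_nonneg_right h6 ha.le]

lemma aux18_f_top {ε K p : ℝ} (hp : 1 < p) (hε : 0 < ε) (hK : 0 < K) (S : ℝ) :
    ∃ RD : ℝ, 0 ≤ RD ∧ ∀ D : ℝ, 0 ≤ D → RD ≤ D →
      S ≤ (ε / (2 * p)) * D ^ p - K * D := by
  set θ : ℝ := 2 * p * (K + 1) / ε with hθ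
  have hθpos : 0 < θ := by positivity
  refine ⟨max (max 1 (θ ^ (p - 1)⁻¹)) |S|, le_trans (by norm_num)
    (le_trans (le_max_left 1 _) (le_max_left _ _)), fun D hD0 hRD => ?_⟩
  have hD1 : (1:ℝ) ≤ D := le_trans (le_trans (le_max_left _ _) (le_max_left _ _)) hRD
  have hDpos : (0:ℝ) < D := by linarith
  have hDθ : θ ^ (p - 1)⁻¹ ≤ D := le_trans (le_trans (le_max_right _ _) (le_max_left _ _)) hRD
  have hDS : |S| ≤ D := le_trans (le_max_right _ _) hRD
  have hpow : θ ≤ D ^ (p - 1) := by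
    have hmono := Real.rpow_le_rpow (Real.rpow_nonneg hθpos.le _) hDθ (by linarith : (0:ℝ) ≤ p - 1)
    rwa [← Real.rpow_mul hθpos.le, inv_mul_cancel₀ (by intro hx; rw [sub_eq_zero] at hx; linarith : p - 1 ≠ 0), Real.rpow_one] at hmono
  have hsplit : D ^ p = D ^ (p - 1) * D := by
    rw [show p = (p - 1) + 1 by ring, Real.rpow_add hDpos, Real.rpow_one]
    ring_nf
  have hc1 : (ε / (2 * p)) * θ = K + 1 := by
    field_simp [hθ]
    rw [hθ]; field_simp
  have h1 : (ε / (2 * p)) * D ^ p = (ε / (2 * p)) * D ^ (p - 1) * D := by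
    rw [hsplit]; ring
  have h2 : (K + 1) * D ≤ (ε / (2 * p)) * D ^ (p - 1) * D := by
    apply mul_le_mul_of_nonneg_right _ hD0
    rw [← hc1]
    apply mul_le_mul_of_nonneg_left hpow (by positivity)
  have h5 := le_abs_self S
  nlinarith

lemma aux18_J_cont {V : Type*} [Fintype V] (p : ℝ) (hp : 1 < p) (A : V → V → Prop)
    [DecidableRel A] (ω : V → V → ℝ) (μ h : V → ℝ) (c : ℝ) :
    Continuous (aux18_J p A ω μ h c) := by
  unfold aux18_J
  apply Continuous.add
  · exact continuous_const.mul (aux18_energy_cont p hp A ω)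
  · apply continuous_finset_sum
    intro k _
    apply Continuous.mul continuous_const
    exact (continuous_const.mul (continuous_apply k)).sub
      (continuous_const.mul ((continuous_apply k).rexp))

/-- if `h ≤ 0`, `h ≢ 0`, then `Δ_p u = c - h e^u` is solvable for every `c < 0`. -/
theorem stmt18 {V : Type*} [Fintype V] [Nonempty V] (p : ℝ) (hp : 1 < p)
    (A : V → V → Prop) [DecidableRel A] (hA : Symmetric A)
    (ω : V → V → ℝ) (hωsymm : ∀ i j, ω i j = ω j i) (hωpos : ∀ i j, A i j → 0 < ω i j)
    (μ : V → ℝ) (hμ : ∀ i, 0 < μ i)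
    (hconn : ∀ i j : V, Relation.ReflTransGen A i j) (h : V → ℝ) (hle : ∀ i, h i ≤ 0) (hne : ∃ i, h i ≠ 0)
    (c : ℝ) (hc : c < 0) :
    ∃ u : V → ℝ, ∀ i, pLap p A ω μ u i = c - h i * Real.exp (u i) := by
  classical
  obtain ⟨i0, hi0ne⟩ := hne
  have hi0 : h i0 < 0 := lt_of_le_of_ne (hle i0) hi0ne
  set J : (V → ℝ) → ℝ := aux18_J p A ω μ h c with hJdef
  set M : ℝ := ∑ k, μ k with hMdef
  have hM : 0 < M := Finset.sum_pos (fun k _ => hμ k) Finset.univ_nonempty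
  set K : ℝ := -c * M with hKdef
  have hK : 0 < K := mul_pos (by linarith) hM
  set β : ℝ := μ i0 * (-h i0) with hβdef
  have hβ : 0 < β := mul_pos (hμ i0) (by linarith)
  obtain ⟨ε, hε, hpoin⟩ := aux18_poincare p hp A ω hωpos hconn i0
  -- key lower bound for J
  have hJlb : ∀ f : V → ℝ,
      ((ε / (2 * p)) * ‖(fun k => f k - f i0)‖ ^ p - K * ‖(fun k => f k - f i0)‖)
        + (β * Real.exp (f i0) - K * (f i0)) ≤ J f := by
    intro f
    set a : ℝ := f i0 with hadef
    set v : V → ℝ := fun k => f k - a with hvdef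
    set D : ℝ := ‖v‖ with hDdef
    have hEv : aux18_energy p A ω v = aux18_energy p A ω f := by
      unfold aux18_energy
      refine Finset.sum_congr rfl fun k _ => Finset.sum_congr rfl fun l _ => ?_
      by_cases hAkl : A k l
      · simp only [hAkl, if_true, hvdef]
        rw [sub_sub_sub_cancel_right]
      · simp [hAkl]
    have hE1 : ε * D ^ p ≤ aux18_energy p A ω f := by
      rw [← hEv]
      exact hpoin v (by simp [hvdef, hadef])
    have hfk : ∀ k, f k ≤ a + D := by
      intro k
      have h1 : v k ≤ |v k| := le_abs_self _
      have h2 : |v k| ≤ D := by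
        rw [hDdef]
        simpa [Real.norm_eq_abs] using norm_le_pi_norm v k
      have : f k = a + v k := by rw [hvdef]; ring
      linarith
    have hEterm : (ε / (2 * p)) * D ^ p ≤ (1 / (2 * p)) * aux18_energy p A ω f := by
      have h2p : (0:ℝ) < 1 / (2 * p) := by positivity
      calc (ε / (2 * p)) * D ^ p = (1 / (2 * p)) * (ε * D ^ p) := by ring
        _ ≤ (1 / (2 * p)) * aux18_energy p A ω f := mul_le_mul_of_nonneg_left hE1 h2p.le
    have hsum : (∑ k, μ k * (c * f k - h k * Real.exp (f k)))
        = (∑ k, μ k * (c * f k)) + ∑ k, μ k * ((-h k) * Real.exp (f k)) := by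
      rw [← Finset.sum_add_distrib]
      exact Finset.sum_congr rfl fun k _ => by ring
    have h1 : M * (c * (a + D)) ≤ ∑ k, μ k * (c * f k) := by
      rw [hMdef, Finset.sum_mul]
      apply Finset.sum_le_sum
      intro k _
      calc μ k * (c * (a + D)) ≤ μ k * (c * f k) := by
            apply mul_le_mul_of_nonneg_left _ (hμ k).le
            exact mul_le_mul_of_nonpos_left (hfk k) hc.le
        _ = μ k * (c * f k) := rfl
    have h2 : β * Real.exp a ≤ ∑ k, μ k * ((-h k) * Real.exp (f k)) := by
      have := Finset.single_le_sum (f := fun k => μ k * ((-h k) * Real.exp (f k)))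
        (fun k _ => mul_nonneg (hμ k).le (mul_nonneg (by linarith [hle k]) (Real.exp_pos _).le))
        (Finset.mem_univ i0)
      calc β * Real.exp a = μ i0 * ((-h i0) * Real.exp (f i0)) := by rw [hβdef, hadef]; ring
        _ ≤ _ := this
    have hKM : M * (c * (a + D)) = -(K * D) - K * a := by rw [hKdef]; ring
    have : (ε / (2 * p)) * D ^ p + (M * (c * (a + D)) + β * Real.exp a) ≤ J f := by
      rw [hJdef]
      unfold aux18_J
      rw [hsum]
      have := add_le_add hEterm (add_le_add h1 h2)
      linarith
    rw [hKM] at this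
    linarith
  -- coercivity
  have hJcont : Continuous J := aux18_J_cont p hp A ω μ h c
  have hco : Filter.Tendsto J (Filter.cocompact (V → ℝ)) Filter.atTop := by
    rw [Filter.tendsto_atTop]
    intro B
    obtain ⟨RD0, hRD00, hRD0⟩ := aux18_f_top (ε := ε) (K := K) hp hε hK 0
    set Cf : ℝ := -(K * RD0) with hCf
    have hCfb : ∀ D : ℝ, 0 ≤ D → Cf ≤ (ε / (2 * p)) * D ^ p - K * D := by
      intro D hD
      rcases le_or_gt RD0 D with hcase | hcase
      · have := hRD0 D hD hcase
        have : (0:ℝ) ≤ (ε / (2 * p)) * D ^ p - K * D := this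
        have hKR : 0 ≤ K * RD0 := mul_nonneg hK.le hRD00
        linarith
      · have hterm : (0:ℝ) ≤ (ε / (2 * p)) * D ^ p := by positivity
        have : K * D ≤ K * RD0 := mul_le_mul_of_nonneg_left hcase.le hK.le
        rw [hCf]
        linarith
    set Cg : ℝ := -(K ^ 2 / β) with hCg
    have hCgb : ∀ a : ℝ, Cg ≤ β * Real.exp a - K * a := fun a => aux18_g_lb hK hβ a
    obtain ⟨Ra, hRa⟩ := aux18_g_top hK hβ (B - Cf)
    obtain ⟨RD, hRDnn, hRD⟩ := aux18_f_top (ε := ε) (K := K) hp hε hK (B - Cg)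
    rw [Filter.eventually_iff]
    apply Filter.mem_cocompact.2
    refine ⟨Metric.closedBall 0 (|Ra| + RD), isCompact_closedBall _ _, ?_⟩
    intro u hu
    simp only [Set.mem_compl_iff, Metric.mem_closedBall, dist_zero_right, not_le] at hu
    set a : ℝ := u i0 with hadef
    set v : V → ℝ := fun k => u k - a with hvdef
    set D : ℝ := ‖v‖ with hDdef
    have hDnn : 0 ≤ D := norm_nonneg _
    have hnorm : ‖u‖ ≤ |a| + D := by
      apply pi_norm_le_iff_of_nonneg (by positivity) |>.2
      intro k
      have h2 : |v k| ≤ D := by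
        rw [hDdef]; simpa [Real.norm_eq_abs] using norm_le_pi_norm v k
      have : u k = a + v k := by rw [hvdef]; ring
      rw [Real.norm_eq_abs, this]
      calc |a + v k| ≤ |a| + |v k| := abs_add_le _ _
        _ ≤ |a| + D := by linarith
    have hsplit : |Ra| < |a| ∨ RD < D := by
      by_contra hcon
      push_neg at hcon
      obtain ⟨hA1, hA2⟩ := hcon
      have : ‖u‖ ≤ |Ra| + RD := by linarith
      linarith
    have hJu := hJlb u
    show B ≤ J u
    rcases hsplit with hcase | hcase
    · have hga : B - Cf ≤ β * Real.exp a - K * a :=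
        hRa a (le_trans (le_abs_self Ra) hcase.le)
      have hfD : Cf ≤ (ε / (2 * p)) * D ^ p - K * D := hCfb D hDnn
      calc B = Cf + (B - Cf) := by ring
        _ ≤ ((ε / (2 * p)) * D ^ p - K * D) + (β * Real.exp a - K * a) :=
            add_le_add hfD hga
        _ ≤ J u := hJu
    · have hfD : B - Cg ≤ (ε / (2 * p)) * D ^ p - K * D := hRD D hDnn hcase.le
      have hga : Cg ≤ β * Real.exp a - K * a := hCgb a
      calc B = (B - Cg) + Cg := by ring
        _ ≤ ((ε / (2 * p)) * D ^ p - K * D) + (β * Real.exp a - K * a) :=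
            add_le_add hfD hga
        _ ≤ J u := hJu
  -- existence of global minimizer
  obtain ⟨u, hmin⟩ := hJcont.exists_forall_le hco
  refine ⟨u, fun i => ?_⟩
  -- Euler-Lagrange at vertex i
  have hloc : IsLocalMin (fun t : ℝ => J (fun k => u k + t * (if k = i then (1:ℝ) else 0))) 0 := by
    apply Filter.Eventually.of_forall
    intro t
    have h0 : (fun k => u k + (0:ℝ) * (if k = i then (1:ℝ) else 0)) = u := by
      funext k; simp
    show J (fun k => u k + (0:ℝ) * _) ≤ _
    rw [h0]
    exact hmin _
  have hD := aux18_hasDerivAt_J p hp A ω μ h c u i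
  have h0 := hloc.hasDerivAt_eq_zero hD
  rw [aux18_Dval p hp A hA ω hωsymm μ hμ u i] at h0
  have hsum2 : (∑ k, μ k * (c * (if k = i then (1:ℝ) else 0)
      - h k * Real.exp (u k) * (if k = i then (1:ℝ) else 0)))
      = μ i * (c - h i * Real.exp (u i)) := by
    rw [Finset.sum_eq_single i]
    · simp
    · intro b _ hb
      simp [hb]
    · intro hni
      exact absurd (Finset.mem_univ i) hni
  rw [hsum2] at h0
  have hmul : μ i * pLap p A ω μ u i = μ i * (c - h i * Real.exp (u i)) := by linarith
  exact mul_left_cancel₀ (ne_of_gt (hμ i)) hmul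
end

section
/- Let h : V → ℝ with μ-average h̄ < 0. Then there exists a constant C_h > 0 such that for every c with -C_h ≤ c < 0, the equation Δ_p u = c - h e^u admits an upper solution u₊ (i.e., Δ_p u₊ - c + h e^{u₊} ≤ 0 on V); consequently it has a solution for every c ∈ (c₋(h), 0) for some c₋(h) ∈ [-∞, 0). -/
open Finset Real
set_option maxHeartbeats 1000000

open Filter

noncomputable def Phi (p t : ℝ) : ℝ := |t| ^ (p - 2) * t

lemma Phi_zero (p : ℝ) : Phi p 0 = 0 := by simp [Phi]

lemma Phi_neg (p t : ℝ) : Phi p (-t) = - Phi p t := by unfold Phi; rw [abs_neg]; ring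

lemma Phi_of_nonneg {p t : ℝ} (hp : 1 < p) (ht : 0 ≤ t) : Phi p t = t ^ (p - 1) := by
  rcases eq_or_lt_of_le ht with h | h
  · simp [Phi, ← h]
    rw [Real.zero_rpow (by linarith)]
  · unfold Phi
    rw [abs_of_pos h]
    have : p - 1 = (p - 2) + 1 := by ring
    rw [this, Real.rpow_add_one (ne_of_gt h)]

lemma Phi_mono {p : ℝ} (hp : 1 < p) : Monotone (Phi p) := by
  have key : ∀ t : ℝ, t ≤ 0 → Phi p t = -((-t) ^ (p - 1)) := by
    intro t ht
    rw [← Phi_of_nonneg hp (by linarith : (0:ℝ) ≤ -t), ← Phi_neg, neg_neg]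
  intro x y hxy
  rcases le_total 0 x with hx | hx
  · rw [Phi_of_nonneg hp hx, Phi_of_nonneg hp (le_trans hx hxy)]
    exact Real.rpow_le_rpow hx hxy (by linarith)
  · rcases le_total 0 y with hy | hy
    · rw [key x hx, Phi_of_nonneg hp hy]
      have h1 : (0:ℝ) ≤ (-x) ^ (p-1) := Real.rpow_nonneg (by linarith) _
      have h2 : (0:ℝ) ≤ y ^ (p-1) := Real.rpow_nonneg hy _
      linarith
    · rw [key x hx, key y hy]
      have := Real.rpow_le_rpow (by linarith : (0:ℝ) ≤ -y) (by linarith : -y ≤ -x) (by linarith : (0:ℝ) ≤ p - 1)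
      linarith

lemma Phi_smul {p : ℝ} (hp : 1 < p) {d : ℝ} (hd : 0 < d) (t : ℝ) :
    Phi p (d * t) = d ^ (p - 1) * Phi p t := by
  unfold Phi
  rw [abs_mul, abs_of_pos hd, Real.mul_rpow hd.le (abs_nonneg t)]
  have : p - 1 = (p - 2) + 1 := by ring
  rw [this, Real.rpow_add_one (ne_of_gt hd)]
  ring

lemma hasDerivAt_absRpow {p : ℝ} (hp : 1 < p) (t : ℝ) :
    HasDerivAt (fun s => |s| ^ p) (p * Phi p t) t := by
  have := hasDerivAt_abs_rpow t hp
  convert this using 1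
  unfold Phi; ring


section A
variable {V : Type*} [Fintype V] [DecidableEq V] (p : ℝ) (A : V → V → Prop) [DecidableRel A]
  (ω : V → V → ℝ) (μ : V → ℝ)

noncomputable def Ep (u : V → ℝ) : ℝ :=
  (1/2) * ∑ i, ∑ j, if A i j then ω i j * |u j - u i| ^ p else 0

noncomputable def Dd (u : V → ℝ) (i : V) : ℝ :=
  ∑ j, if A i j then ω i j * Phi p (u j - u i) else 0

variable {p A ω μ}

lemma mu_pLap (hμ : ∀ i, 0 < μ i) (u : V → ℝ) (i : V) :
    μ i * pLap p A ω μ u i = Dd p A ω u i := by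
  unfold pLap Dd Phi
  rw [show (fun j => if A i j then ω i j * |u j - u i| ^ (p-2) * (u j - u i) else 0)
      = (fun j => if A i j then ω i j * (|u j - u i| ^ (p-2) * (u j - u i)) else 0) by
    funext j; split_ifs <;> ring]
  rw [← mul_assoc, mul_one_div, div_self (ne_of_gt (hμ i)), one_mul]

lemma Ep_nonneg (hω : ∀ i j, A i j → 0 < ω i j) (u : V → ℝ) : 0 ≤ Ep p A ω u := by
  unfold Ep
  apply mul_nonneg (by norm_num)
  apply Finset.sum_nonneg; intro i _
  apply Finset.sum_nonneg; intro j _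
  split_ifs with hij
  · exact mul_nonneg (hω i j hij).le (Real.rpow_nonneg (abs_nonneg _) _)
  · exact le_refl 0

lemma Ep_add_const (u : V → ℝ) (cst : ℝ) : Ep p A ω (fun i => u i + cst) = Ep p A ω u := by
  unfold Ep; congr 1; apply Finset.sum_congr rfl; intro i _
  apply Finset.sum_congr rfl; intro j _
  have : u j + cst - (u i + cst) = u j - u i := by ring
  rw [this]

lemma Ep_continuous (hp : 1 < p) : Continuous (fun u : V → ℝ => Ep p A ω u) := by
  unfold Ep
  apply Continuous.mul continuous_const
  apply continuous_finset_sum; intro i _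
  apply continuous_finset_sum; intro j _
  split_ifs with hij
  · exact Continuous.mul continuous_const
      (Continuous.rpow_const ((continuous_apply j).sub (continuous_apply i)).abs
        (fun x => Or.inr (by linarith)))
  · exact continuous_const

lemma Ep_update (hp : 1 < p) (hA : Symmetric A) (hωsymm : ∀ i j, ω i j = ω j i)
    (u : V → ℝ) (i : V) (t : ℝ) :
    Ep p A ω (Function.update u i t) =
      (1/2) * ∑ k ∈ univ.erase i, ∑ l ∈ univ.erase i,
          (if A k l then ω k l * |u l - u k| ^ p else 0)
        + ∑ l ∈ univ.erase i, (if A i l then ω i l * |u l - t| ^ p else 0) := by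
  classical
  set u' := Function.update u i t with hu'
  have hui : u' i = t := Function.update_self i t u
  have hun : ∀ k, k ≠ i → u' k = u k := fun k hk => Function.update_of_ne hk t u
  unfold Ep
  rw [← Finset.add_sum_erase univ _ (mem_univ i)]
  have hrow : ∀ k, (∑ l, if A k l then ω k l * |u' l - u' k| ^ p else 0)
      = (if A k i then ω k i * |t - u' k| ^ p else 0)
        + ∑ l ∈ univ.erase i, (if A k l then ω k l * |u' l - u' k| ^ p else 0) := by
    intro k
    rw [← Finset.add_sum_erase univ _ (mem_univ i), hui]
  rw [hrow i]
  have h00 : (if A i i then ω i i * |t - u' i| ^ p else 0) = 0 := by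
    rw [hui]
    simp [Real.zero_rpow (by linarith : p ≠ 0)]
  rw [h00, zero_add, hui]
  have hsum2 : ∀ k ∈ univ.erase i, (∑ l, if A k l then ω k l * |u' l - u' k| ^ p else 0)
      = (if A i k then ω i k * |u k - t| ^ p else 0)
        + ∑ l ∈ univ.erase i, (if A k l then ω k l * |u l - u k| ^ p else 0) := by
    intro k hk
    have hki : k ≠ i := (Finset.mem_erase.mp hk).1
    rw [hrow k, hun k hki]
    congr 1
    · refine if_congr ⟨fun h => hA h, fun h => hA h⟩ ?_ rfl
      rw [hωsymm k i, abs_sub_comm]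
    · apply Finset.sum_congr rfl; intro l hl
      rw [hun l (Finset.mem_erase.mp hl).1]
  rw [Finset.sum_congr rfl hsum2, Finset.sum_add_distrib]
  have hcongr : ∀ l ∈ univ.erase i, (if A i l then ω i l * |u' l - t| ^ p else 0)
      = (if A i l then ω i l * |u l - t| ^ p else 0) := by
    intro l hl; rw [hun l (Finset.mem_erase.mp hl).1]
  rw [Finset.sum_congr rfl hcongr]
  ring

lemma hasDerivAt_Ep (hp : 1 < p) (hA : Symmetric A) (hωsymm : ∀ i j, ω i j = ω j i)
    (u : V → ℝ) (i : V) :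
    HasDerivAt (fun t => Ep p A ω (Function.update u i t)) (-(p * Dd p A ω u i)) (u i) := by
  classical
  have heq : (fun t => Ep p A ω (Function.update u i t))
      = fun t => (1/2) * ∑ k ∈ univ.erase i, ∑ l ∈ univ.erase i,
          (if A k l then ω k l * |u l - u k| ^ p else 0)
        + ∑ l ∈ univ.erase i, (if A i l then ω i l * |u l - t| ^ p else 0) := by
    funext t; exact Ep_update hp hA hωsymm u i t
  rw [heq]
  have hterm : ∀ l ∈ univ.erase i, HasDerivAt
      (fun t => if A i l then ω i l * |u l - t| ^ p else 0)
      (if A i l then ω i l * -(p * Phi p (u l - u i)) else 0) (u i) := by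
    intro l _
    split_ifs with hil
    · have hinner : HasDerivAt (fun t : ℝ => u l - t) (-1) (u i) := by
        simpa using (hasDerivAt_id' (u i)).const_sub (u l)
      have houter := (hasDerivAt_absRpow hp (u l - u i)).comp (u i) hinner
      have := houter.const_mul (ω i l)
      exact this.congr_deriv (by ring)
    · exact hasDerivAt_const _ 0
  have hsum := HasDerivAt.fun_sum hterm
  have := hsum.const_add ((1/2) * ∑ k ∈ univ.erase i, ∑ l ∈ univ.erase i,
          (if A k l then ω k l * |u l - u k| ^ p else 0))
  refine this.congr_deriv ?_
  symm
  unfold Dd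
  rw [← Finset.add_sum_erase univ _ (mem_univ i)]
  have h0 : (if A i i then ω i i * Phi p (u i - u i) else 0) = 0 := by
    simp [Phi]
  rw [h0, zero_add, Finset.mul_sum, ← Finset.sum_neg_distrib]
  apply Finset.sum_congr rfl; intro l _
  split_ifs <;> ring

lemma sum_Dd_mul (hA : Symmetric A) (hωsymm : ∀ i j, ω i j = ω j i) (f g : V → ℝ) :
    ∑ i, Dd p A ω f i * g i =
      (1/2) * ∑ i, ∑ j, if A i j then ω i j * Phi p (f j - f i) * (g i - g j) else 0 := by
  classical
  have hS : ∑ i, Dd p A ω f i * g i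
      = ∑ i, ∑ j, if A i j then ω i j * Phi p (f j - f i) * g i else 0 := by
    unfold Dd
    apply Finset.sum_congr rfl; intro i _
    rw [Finset.sum_mul]
    apply Finset.sum_congr rfl; intro j _
    split_ifs <;> ring
  have hS' : ∑ i, Dd p A ω f i * g i
      = ∑ i, ∑ j, if A i j then -(ω i j * Phi p (f j - f i) * g j) else 0 := by
    rw [hS, Finset.sum_comm]
    apply Finset.sum_congr rfl; intro i _
    apply Finset.sum_congr rfl; intro j _
    refine Eq.trans (if_congr ⟨fun h => hA h, fun h => hA h⟩ rfl rfl) ?_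
    split_ifs with hij
    · rw [hωsymm j i]
      have : Phi p (f i - f j) = - Phi p (f j - f i) := by
        rw [← Phi_neg]; congr 1; ring
      rw [this]; ring
    · rfl
  have h2 : 2 * (∑ i, Dd p A ω f i * g i)
      = ∑ i, ∑ j, if A i j then ω i j * Phi p (f j - f i) * (g i - g j) else 0 := by
    nth_rewrite 1 [two_mul]
    nth_rewrite 1 [hS]
    nth_rewrite 1 [hS']
    rw [← Finset.sum_add_distrib]
    apply Finset.sum_congr rfl; intro i _
    rw [← Finset.sum_add_distrib]
    apply Finset.sum_congr rfl; intro j _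
    split_ifs <;> ring
  linarith

lemma sum_Dd_zero (hA : Symmetric A) (hωsymm : ∀ i j, ω i j = ω j i) (f : V → ℝ) :
    ∑ i, Dd p A ω f i = 0 := by
  have := sum_Dd_mul (p := p) hA hωsymm f (fun _ => 1)
  simp only [mul_one] at this
  rw [this]
  have : ∀ i j : V, (if A i j then ω i j * Phi p (f j - f i) * ((1:ℝ) - 1) else 0) = 0 := by
    intro i j; split_ifs <;> simp
  simp [this]

end A
section B
open intervalIntegral

noncomputable def Eb (b t : ℝ) : ℝ := ∫ s in (0:ℝ)..t, Real.exp (min s b)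

lemma Eb_contI (b : ℝ) : Continuous fun s => Real.exp (min s b) :=
  Real.continuous_exp.comp (continuous_id.min continuous_const)

lemma Eb_integrable (b x y : ℝ) : IntervalIntegrable (fun s => Real.exp (min s b))
    MeasureTheory.volume x y := (Eb_contI b).intervalIntegrable x y

lemma hasDerivAt_Eb (b t : ℝ) : HasDerivAt (Eb b) (Real.exp (min t b)) t := by
  exact intervalIntegral.integral_hasDerivAt_right (Eb_integrable b 0 t)
    ((Eb_contI b).stronglyMeasurable.stronglyMeasurableAtFilter)
    (Eb_contI b).continuousAt

lemma Eb_continuous (b : ℝ) : Continuous (Eb b) :=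
  continuous_iff_continuousAt.mpr fun t => (hasDerivAt_Eb b t).continuousAt

lemma Eb_zero (b : ℝ) : Eb b 0 = 0 := by simp [Eb]

lemma Eb_sub (b s t : ℝ) : Eb b t - Eb b s = ∫ x in s..t, Real.exp (min x b) := by
  have := intervalIntegral.integral_add_adjacent_intervals
    (Eb_integrable b 0 s) (Eb_integrable b s t)
  unfold Eb; linarith

lemma Eb_lipschitz (b s t : ℝ) : |Eb b t - Eb b s| ≤ Real.exp b * |t - s| := by
  rw [Eb_sub]
  have : ∀ x ∈ Set.uIoc s t, ‖Real.exp (min x b)‖ ≤ Real.exp b := by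
    intro x _
    rw [Real.norm_eq_abs, abs_of_pos (Real.exp_pos _)]
    exact Real.exp_le_exp.mpr (min_le_right x b)
  exact intervalIntegral.norm_integral_le_of_norm_le_const this

lemma Eb_mono (b : ℝ) : Monotone (Eb b) := by
  intro s t hst
  have h := Eb_sub b s t
  have : 0 ≤ ∫ x in s..t, Real.exp (min x b) :=
    intervalIntegral.integral_nonneg hst (fun x _ => (Real.exp_pos _).le)
  linarith

lemma Eb_nonpos_le (b : ℝ) {t : ℝ} (ht : t ≤ 0) : -1 ≤ Eb b t ∧ Eb b t ≤ 0 := by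
  constructor
  · have h := Eb_sub b t 0
    rw [Eb_zero] at h
    have hle : (∫ x in t..(0:ℝ), Real.exp (min x b)) ≤ ∫ x in t..(0:ℝ), Real.exp x := by
      apply intervalIntegral.integral_mono_on ht (Eb_integrable b t 0)
        (Real.continuous_exp.intervalIntegrable t 0)
      intro x _
      exact Real.exp_le_exp.mpr (min_le_left x b)
    rw [integral_exp] at hle
    have he : Real.exp t > 0 := Real.exp_pos t
    simp only [Real.exp_zero] at hle
    linarith
  · have := Eb_mono b ht
    rw [Eb_zero] at this
    exact this

lemma Eb_nonneg_le (b : ℝ) {t : ℝ} (ht : 0 ≤ t) : 0 ≤ Eb b t ∧ Eb b t ≤ Real.exp b * t := by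
  constructor
  · have := Eb_mono b ht
    rw [Eb_zero] at this
    exact this
  · have h := Eb_lipschitz b 0 t
    rw [Eb_zero, sub_zero, sub_zero, abs_of_nonneg ht] at h
    calc Eb b t ≤ |Eb b t| := le_abs_self _
      _ ≤ Real.exp b * t := h

lemma Eb_abs_le_one (b : ℝ) {t : ℝ} (ht : t ≤ 0) : |Eb b t| ≤ 1 := by
  obtain ⟨h1, h2⟩ := Eb_nonpos_le b ht
  rw [abs_le]; constructor <;> linarith

lemma Eb_slope_above (b : ℝ) {s t : ℝ} (hb : b ≤ s) (hst : s ≤ t) :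
    Eb b t = Eb b s + Real.exp b * (t - s) := by
  have h := Eb_sub b s t
  have hcongr : ∫ x in s..t, Real.exp (min x b) = ∫ x in s..t, Real.exp b := by
    apply intervalIntegral.integral_congr
    intro x hx
    rw [Set.uIcc_of_le hst] at hx
    have : b ≤ x := le_trans hb hx.1
    simp [min_eq_right this]
  rw [hcongr, intervalIntegral.integral_const, smul_eq_mul] at h
  linarith

end B
section C
variable {V : Type*} [Fintype V] [Nonempty V] [DecidableEq V] {p : ℝ} {A : V → V → Prop}
  [DecidableRel A] {ω : V → V → ℝ} {μ : V → ℝ}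

lemma edge_bound (hp : 1 < p) (hA : Symmetric A) (hωsymm : ∀ i j, ω i j = ω j i)
    (hωpos : ∀ i j, A i j → 0 < ω i j) (u : V → ℝ) {i j : V} (hij : A i j) :
    ω i j * |u j - u i| ^ p ≤ Ep p A ω u := by
  classical
  have hterm : ∀ q : V × V, 0 ≤ (if A q.1 q.2 then ω q.1 q.2 * |u q.2 - u q.1| ^ p else 0) := by
    intro q; split_ifs with hq
    · exact mul_nonneg (hωpos _ _ hq).le (Real.rpow_nonneg (abs_nonneg _) _)
    · exact le_refl 0
  have hEp : Ep p A ω u = (1/2) * ∑ q ∈ (Finset.univ ×ˢ Finset.univ),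
      (if A q.1 q.2 then ω q.1 q.2 * |u q.2 - u q.1| ^ p else 0) := by
    unfold Ep; rw [← Finset.sum_product']
  rcases eq_or_ne i j with rfl | hne
  · have : |u i - u i| ^ p = 0 := by
      simp [Real.zero_rpow (by linarith : p ≠ 0)]
    rw [this, mul_zero]
    exact Ep_nonneg hωpos u
  · have hsub : {((i,j) : V × V), ((j,i) : V × V)} ⊆ (Finset.univ ×ˢ Finset.univ) := by
      intro q _; simp
    have hge := Finset.sum_le_sum_of_subset_of_nonneg hsub (fun q _ _ => hterm q)
    rw [Finset.sum_pair (by simp [hne] : ((i,j) : V × V) ≠ (j,i))] at hge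
    have hji : A j i := hA hij
    have heq : (if A j i then ω j i * |u i - u j| ^ p else 0)
        = ω i j * |u j - u i| ^ p := by
      rw [if_pos hji, hωsymm j i, abs_sub_comm]
    rw [if_pos hij, heq] at hge
    rw [hEp]
    nlinarith [hterm ((i,j) : V × V)]

lemma poincare (hp : 1 < p) (hA : Symmetric A) (hωsymm : ∀ i j, ω i j = ω j i)
    (hωpos : ∀ i j, A i j → 0 < ω i j) (hμ : ∀ i, 0 < μ i)
    (hconn : ∀ i j : V, Relation.ReflTransGen A i j) :
    ∃ C₀ > (0:ℝ), ∀ (u : V → ℝ) (i : V),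
      C₀ * |u i - (∑ j, μ j * u j)/(∑ j, μ j)| ^ p ≤ Ep p A ω u := by
  classical
  have hM : (0:ℝ) < ∑ j, μ j := Finset.sum_pos (fun j _ => hμ j) Finset.univ_nonempty
  have hp0 : p ≠ 0 := by linarith
  by_cases hedge : ∃ q : V × V, A q.1 q.2
  · -- there is at least one edge
    set E : Finset (V × V) := Finset.univ.filter (fun q => A q.1 q.2) with hE
    have hEne : E.Nonempty := ⟨hedge.choose, by simp [hE, hedge.choose_spec]⟩
    set W : ℝ := (E.image fun q => ω q.1 q.2).min' (hEne.image _) with hW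
    have hWpos : 0 < W := by
      obtain ⟨q, hq, hqe⟩ := Finset.mem_image.mp ((E.image fun q => ω q.1 q.2).min'_mem (hEne.image _))
      rw [hW, ← hqe]
      exact hωpos _ _ (by simpa [hE] using hq)
    have hWle : ∀ i j, A i j → W ≤ ω i j := by
      intro i j hij
      exact Finset.min'_le _ _ (Finset.mem_image.mpr ⟨(i,j), by simp [hE, hij], rfl⟩)
    have hEpnn : ∀ u : V → ℝ, (0:ℝ) ≤ (Ep p A ω u / W) ^ p⁻¹ := fun u =>
      Real.rpow_nonneg (div_nonneg (Ep_nonneg hωpos u) hWpos.le) _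
    -- single-edge estimate
    have hstep : ∀ (u : V → ℝ) {i j : V}, A i j → |u j - u i| ≤ (Ep p A ω u / W) ^ p⁻¹ := by
      intro u i j hij
      have h1 : W * |u j - u i| ^ p ≤ Ep p A ω u := by
        calc W * |u j - u i| ^ p ≤ ω i j * |u j - u i| ^ p :=
              mul_le_mul_of_nonneg_right (hWle i j hij) (Real.rpow_nonneg (abs_nonneg _) _)
          _ ≤ Ep p A ω u := edge_bound hp hA hωsymm hωpos u hij
      have h2 : |u j - u i| ^ p ≤ Ep p A ω u / W := by
        rw [le_div_iff₀ hWpos]; linarith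
      have h3 := Real.rpow_le_rpow (Real.rpow_nonneg (abs_nonneg _) _) h2
        (by positivity : (0:ℝ) ≤ p⁻¹)
      rwa [Real.rpow_rpow_inv (abs_nonneg _) hp0] at h3
    -- path estimate
    have claim1 : ∀ i j : V, Relation.ReflTransGen A i j →
        ∃ n : ℕ, ∀ u : V → ℝ, |u j - u i| ≤ n * (Ep p A ω u / W) ^ p⁻¹ := by
      intro i j hrel
      induction hrel with
      | refl => exact ⟨0, fun u => by simp⟩
      | @tail b c hsteps hAe ih =>
        obtain ⟨n, hn⟩ := ih
        refine ⟨n + 1, fun u => ?_⟩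
        have h1 := hn u
        have h2 := hstep u hAe
        have : |u c - u i| ≤ |u b - u i| + |u c - u b| := by
          calc |u c - u i| = |(u b - u i) + (u c - u b)| := by ring_nf
            _ ≤ |u b - u i| + |u c - u b| := abs_add_le _ _
        push_cast
        linarith
    -- uniform constant
    set nf : V × V → ℕ := fun q => (claim1 q.1 q.2 (hconn q.1 q.2)).choose with hnf
    set N : ℕ := Finset.univ.sup nf with hN
    have hNb : ∀ (u : V → ℝ) (i j : V), |u j - u i| ≤ ((N:ℝ)+1) * (Ep p A ω u / W) ^ p⁻¹ := by
      intro u i j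
      have h1 := (claim1 i j (hconn i j)).choose_spec u
      have h2 : (nf (i,j) : ℝ) ≤ (N:ℝ) + 1 := by
        have := Finset.le_sup (f := nf) (Finset.mem_univ (i,j))
        push_cast
        exact le_trans (Nat.cast_le.mpr this) (by linarith)
      calc |u j - u i| ≤ (nf (i,j) : ℝ) * (Ep p A ω u / W) ^ p⁻¹ := h1
        _ ≤ ((N:ℝ)+1) * (Ep p A ω u / W) ^ p⁻¹ :=
            mul_le_mul_of_nonneg_right h2 (hEpnn u)
    -- distance to average
    have havg : ∀ (u : V → ℝ) (i : V),
        |u i - (∑ j, μ j * u j)/(∑ j, μ j)| ≤ ((N:ℝ)+1) * (Ep p A ω u / W) ^ p⁻¹ := by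
      intro u i
      have hnum : (∑ j, μ j * (u i - u j)) = u i * (∑ j, μ j) - ∑ j, μ j * u j := by
        have hpt : ∀ j : V, μ j * (u i - u j) = μ j * u i - μ j * u j := fun j => by ring
        rw [Finset.sum_congr rfl (fun j _ => hpt j), Finset.sum_sub_distrib, ← Finset.sum_mul,
          mul_comm]
      have hrepr : u i - (∑ j, μ j * u j)/(∑ j, μ j)
          = (∑ j, μ j * (u i - u j)) / (∑ j, μ j) := by
        rw [hnum]; field_simp
      rw [hrepr, abs_div, abs_of_pos hM, div_le_iff₀ hM]
      calc |∑ j, μ j * (u i - u j)| ≤ ∑ j, |μ j * (u i - u j)| := Finset.abs_sum_le_sum_abs _ _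
        _ ≤ ∑ j : V, μ j * (((N:ℝ)+1) * (Ep p A ω u / W) ^ p⁻¹) := by
            apply Finset.sum_le_sum
            intro j _
            rw [abs_mul, abs_of_pos (hμ j)]
            exact mul_le_mul_of_nonneg_left (hNb u j i) (hμ j).le
        _ = ((N:ℝ)+1) * (Ep p A ω u / W) ^ p⁻¹ * ∑ j, μ j := by
            rw [← Finset.sum_mul, mul_comm]
    -- conclusion
    have hNr : (0:ℝ) < ((N:ℝ)+1) ^ p := Real.rpow_pos_of_pos (by positivity) p
    refine ⟨W / ((N:ℝ)+1) ^ p, by positivity, ?_⟩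
    intro u i
    have h1 := havg u i
    have h2 := Real.rpow_le_rpow (abs_nonneg _) h1 (by linarith : (0:ℝ) ≤ p)
    rw [Real.mul_rpow (by positivity) (hEpnn u),
      Real.rpow_inv_rpow (div_nonneg (Ep_nonneg hωpos u) hWpos.le) hp0] at h2
    calc W / ((N:ℝ)+1) ^ p * |u i - (∑ j, μ j * u j)/(∑ j, μ j)| ^ p
        ≤ W / ((N:ℝ)+1) ^ p * (((N:ℝ)+1) ^ p * (Ep p A ω u / W)) :=
          mul_le_mul_of_nonneg_left h2 (by positivity)
      _ = Ep p A ω u := by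
          field_simp
  · -- no edges : V is a singleton for all practical purposes
    have hsingle : ∀ i j : V, i = j := by
      intro i j
      induction hconn i j with
      | refl => rfl
      | tail hsteps hAe ih => exact absurd ⟨(_, _), hAe⟩ hedge
    refine ⟨1, by norm_num, ?_⟩
    intro u i
    have hconst : ∀ j : V, u j = u i := fun j => by rw [hsingle j i]
    have : (∑ j, μ j * u j) = (∑ j, μ j) * u i := by
      rw [Finset.sum_congr rfl (fun j _ => by rw [hconst j]), ← Finset.sum_mul]
    have hui : (∑ j, μ j) * u i / (∑ j, μ j) = u i := by field_simp
    rw [this, hui, sub_self, abs_zero, Real.zero_rpow hp0, mul_zero]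
    exact Ep_nonneg hωpos u

end C
section D
open Filter
variable {V : Type*} [Fintype V] [Nonempty V] [DecidableEq V] {p : ℝ} {A : V → V → Prop}
  [DecidableRel A] {ω : V → V → ℝ} {μ : V → ℝ}

lemma exists_min {G : (V → ℝ) → ℝ} (hc : Continuous G) {β B : ℝ} (hβ : 0 < β)
    (hbd : ∀ u : V → ℝ, β * ‖u‖ - B ≤ G u) : ∃ u, ∀ v, G u ≤ G v := by
  apply hc.exists_forall_le
  have h1 : Tendsto (fun u : V → ℝ => ‖u‖) (cocompact _) atTop := tendsto_norm_cocompact_atTop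
  have h2 : Tendsto (fun u : V → ℝ => β * ‖u‖ - B) (cocompact _) atTop := by
    have := h1.const_mul_atTop hβ
    simpa [sub_eq_add_neg] using tendsto_atTop_add_const_right _ (-B) this
  exact tendsto_atTop_mono hbd h2

lemma exists_critical (hp : 1 < p) (hA : Symmetric A) (hωsymm : ∀ i j, ω i j = ω j i)
    (F F' : V → ℝ → ℝ) (hder : ∀ k t, HasDerivAt (F k) (F' k t) t)
    (γ : ℝ) {β B : ℝ} (hβ : 0 < β)
    (hbd : ∀ u : V → ℝ, β * ‖u‖ - B ≤
      (1/p) * Ep p A ω u + (∑ k, F k (u k)) + γ * (∑ k, μ k * u k)^2) :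
    ∃ u : V → ℝ, (∀ i, Dd p A ω u i = F' i (u i) + 2 * γ * (∑ k, μ k * u k) * μ i) ∧
      (∀ v : V → ℝ, (1/p) * Ep p A ω u + (∑ k, F k (u k)) + γ * (∑ k, μ k * u k)^2
          ≤ (1/p) * Ep p A ω v + (∑ k, F k (v k)) + γ * (∑ k, μ k * v k)^2) := by
  classical
  set G : (V → ℝ) → ℝ := fun u =>
    (1/p) * Ep p A ω u + (∑ k, F k (u k)) + γ * (∑ k, μ k * u k)^2 with hG
  have hFc : ∀ k, Continuous (F k) :=
    fun k => continuous_iff_continuousAt.mpr fun t => (hder k t).continuousAt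
  have hGc : Continuous G := by
    apply Continuous.add
    apply Continuous.add
    · exact continuous_const.mul (Ep_continuous hp)
    · exact continuous_finset_sum _ (fun k _ => (hFc k).comp (continuous_apply k))
    · exact continuous_const.mul ((continuous_finset_sum _ (fun k _ => continuous_const.mul (continuous_apply k))).pow 2)
  obtain ⟨u, hu⟩ := exists_min hGc hβ hbd
  refine ⟨u, ?_, hu⟩
  intro i
  -- the coordinate function has a local minimum at u i
  have hmin : IsLocalMin (fun t => G (Function.update u i t)) (u i) := by
    have hpt : ∀ t, (fun t => G (Function.update u i t)) (u i) ≤ G (Function.update u i t) := by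
      intro t
      simp only [Function.update_eq_self]
      exact hu _
    exact Filter.Eventually.of_forall hpt
  -- derivative of the coordinate function
  have h1 : HasDerivAt (fun t => (1/p) * Ep p A ω (Function.update u i t))
      ((1/p) * -(p * Dd p A ω u i)) (u i) :=
    (hasDerivAt_Ep hp hA hωsymm u i).const_mul (1/p)
  have heq2 : (fun t => ∑ k, F k (Function.update u i t k))
      = fun t => F i t + ∑ k ∈ Finset.univ.erase i, F k (u k) := by
    funext t
    rw [← Finset.add_sum_erase Finset.univ (fun k => F k (Function.update u i t k))
      (Finset.mem_univ i)]
    congr 1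
    · rw [Function.update_self]
    · apply Finset.sum_congr rfl; intro k hk
      rw [Function.update_of_ne (Finset.mem_erase.mp hk).1]
  have h2 : HasDerivAt (fun t => ∑ k, F k (Function.update u i t k)) (F' i (u i)) (u i) := by
    rw [heq2]
    exact (hder i (u i)).add_const _
  have heq3 : (fun t => ∑ k, μ k * Function.update u i t k)
      = fun t => μ i * t + ∑ k ∈ Finset.univ.erase i, μ k * u k := by
    funext t
    rw [← Finset.add_sum_erase Finset.univ (fun k => μ k * Function.update u i t k)
      (Finset.mem_univ i)]
    congr 1
    · rw [Function.update_self]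
    · apply Finset.sum_congr rfl; intro k hk
      rw [Function.update_of_ne (Finset.mem_erase.mp hk).1]
  have hin : HasDerivAt (fun t => ∑ k, μ k * Function.update u i t k) (μ i) (u i) := by
    rw [heq3]
    simpa using ((hasDerivAt_id (u i)).const_mul (μ i)).add_const (∑ k ∈ Finset.univ.erase i, μ k * u k)
  have h3 : HasDerivAt (fun t => γ * (∑ k, μ k * Function.update u i t k)^2)
      (γ * (2 * (∑ k, μ k * u k) * μ i)) (u i) := by
    have := (hin.pow 2).const_mul γ
    refine this.congr_deriv ?_
    have hself : (∑ k, μ k * Function.update u i (u i) k) = ∑ k, μ k * u k := by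
      rw [Function.update_eq_self]
    rw [hself]
    push_cast
    ring
  have hD := (h1.add h2).add h3
  have hval := hmin.hasDerivAt_eq_zero hD
  have hps : (1/p) * -(p * Dd p A ω u i) = - Dd p A ω u i := by
    field_simp
  rw [hps] at hval
  linarith

end D
section E
variable {V : Type*} [Fintype V] [Nonempty V] [DecidableEq V] {p : ℝ} {A : V → V → Prop}
  [DecidableRel A] {ω : V → V → ℝ} {μ : V → ℝ}

lemma rpow_linear_bound (hp : 1 < p) {C K : ℝ} (hC : 0 < C) (hK : 0 ≤ K) :
    ∃ B : ℝ, 0 ≤ B ∧ ∀ t : ℝ, 0 ≤ t → K * t ≤ C * t ^ p + B := by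
  set x : ℝ := K / C + 1 with hx
  have hx1 : (1:ℝ) ≤ x := by
    have : 0 ≤ K / C := div_nonneg hK hC.le
    rw [hx]; linarith
  set t₀ : ℝ := x ^ (p - 1)⁻¹ with ht₀
  have ht₀pos : 0 < t₀ := Real.rpow_pos_of_pos (by linarith) _
  have ht₀pow : t₀ ^ (p - 1) = x := Real.rpow_inv_rpow (by linarith) (by linarith)
  refine ⟨K * t₀, mul_nonneg hK ht₀pos.le, ?_⟩
  intro t ht
  rcases le_total t t₀ with h | h
  · have h1 : K * t ≤ K * t₀ := mul_le_mul_of_nonneg_left h hK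
    have h2 : 0 ≤ C * t ^ p := mul_nonneg hC.le (Real.rpow_nonneg ht _)
    linarith
  · have htpos : 0 < t := lt_of_lt_of_le ht₀pos h
    have h1 : x ≤ t ^ (p - 1) := by
      rw [← ht₀pow]
      exact Real.rpow_le_rpow ht₀pos.le h (by linarith)
    have h2 : K ≤ C * t ^ (p - 1) := by
      have hKC : K / C ≤ t ^ (p - 1) := by rw [hx] at h1; linarith
      calc K = C * (K / C) := by field_simp
        _ ≤ C * t ^ (p - 1) := mul_le_mul_of_nonneg_left hKC hC.le
    have h3 : K * t ≤ C * t ^ p := by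
      have htp : t ^ p = t ^ (p - 1) * t := by
        rw [show p = p - 1 + 1 by ring, Real.rpow_add_one (ne_of_gt htpos)]
        ring_nf
      rw [htp, ← mul_assoc]
      exact mul_le_mul_of_nonneg_right h2 ht
    have hB : 0 ≤ K * t₀ := mul_nonneg hK ht₀pos.le
    linarith

/-- abs of coordinates is dominated by max coordinate -/
lemma exists_sup_coord (w : V → ℝ) : ∃ i₀ : V, (∀ k, |w k| ≤ |w i₀|) := by
  obtain ⟨i₀, -, hmax⟩ := Finset.exists_max_image Finset.univ (fun k => |w k|)
    ⟨Classical.arbitrary V, Finset.mem_univ _⟩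
  exact ⟨i₀, fun k => hmax k (Finset.mem_univ k)⟩

lemma norm_le_of_coords {u : V → ℝ} {r : ℝ} (hr : 0 ≤ r) (h : ∀ k, |u k| ≤ r) : ‖u‖ ≤ r := by
  rw [pi_norm_le_iff_of_nonneg hr]
  intro k
  rw [Real.norm_eq_abs]
  exact h k

lemma solve_meanzero (hp : 1 < p) (hA : Symmetric A) (hωsymm : ∀ i j, ω i j = ω j i)
    (hωpos : ∀ i j, A i j → 0 < ω i j) (hμ : ∀ i, 0 < μ i)
    (hconn : ∀ i j : V, Relation.ReflTransGen A i j)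
    (f : V → ℝ) (hf : ∑ i, μ i * f i = 0) :
    ∃ v : V → ℝ, ∀ i, pLap p A ω μ v i = f i := by
  classical
  obtain ⟨C₀, hC₀, hpoin⟩ := poincare (μ := μ) hp hA hωsymm hωpos hμ hconn
  have hM : (0:ℝ) < ∑ j, μ j := Finset.sum_pos (fun j _ => hμ j) Finset.univ_nonempty
  set M : ℝ := ∑ j, μ j with hMdef
  set F₁ : ℝ := ∑ k, μ k * |f k| with hF₁
  have hF₁nn : 0 ≤ F₁ := Finset.sum_nonneg (fun k _ => mul_nonneg (hμ k).le (abs_nonneg _))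
  obtain ⟨B₂, hB₂nn, hB₂⟩ := rpow_linear_bound hp
    (by positivity : (0:ℝ) < C₀ / p) (by linarith : (0:ℝ) ≤ F₁ + 1)
  set β : ℝ := min 1 (M^2) with hβdef
  have hβ : 0 < β := lt_min one_pos (by positivity)
  -- coercivity
  have hbd : ∀ u : V → ℝ, β * ‖u‖ - (B₂ + 1) ≤
      (1/p) * Ep p A ω u + (∑ k, μ k * f k * u k) + 1 * (∑ k, μ k * u k)^2 := by
    intro u
    set s : ℝ := (∑ j, μ j * u j) / M with hs
    set w : V → ℝ := fun k => u k - s with hw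
    obtain ⟨i₀, hi₀⟩ := exists_sup_coord w
    set W : ℝ := |w i₀| with hWdef
    have hWnn : 0 ≤ W := abs_nonneg _
    -- energy bound
    have hEp : (C₀/p) * W ^ p ≤ (1/p) * Ep p A ω u := by
      have := hpoin u i₀
      have hdiv : (0:ℝ) < p := by linarith
      calc (C₀/p) * W ^ p = (1/p) * (C₀ * |u i₀ - (∑ j, μ j * u j)/M| ^ p) := by
            rw [hWdef, hw]; ring
        _ ≤ (1/p) * Ep p A ω u := by
            apply mul_le_mul_of_nonneg_left _ (by positivity)
            exact this
    -- linear term bound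
    have hlin : -(F₁ * W) ≤ ∑ k, μ k * f k * u k := by
      have hsplit : ∑ k, μ k * f k * u k = ∑ k, μ k * f k * w k := by
        have : ∀ k, μ k * f k * u k = μ k * f k * w k + (μ k * f k) * s := by
          intro k; rw [hw]; ring
        rw [Finset.sum_congr rfl (fun k _ => this k), Finset.sum_add_distrib,
          ← Finset.sum_mul, hf, zero_mul, add_zero]
      rw [hsplit]
      have habs : |∑ k, μ k * f k * w k| ≤ F₁ * W := by
        calc |∑ k, μ k * f k * w k| ≤ ∑ k, |μ k * f k * w k| := Finset.abs_sum_le_sum_abs _ _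
          _ ≤ ∑ k, μ k * |f k| * W := by
              apply Finset.sum_le_sum
              intro k _
              rw [abs_mul, abs_mul, abs_of_pos (hμ k)]
              exact mul_le_mul_of_nonneg_left (hi₀ k) (mul_nonneg (hμ k).le (abs_nonneg _))
          _ = F₁ * W := by rw [hF₁, Finset.sum_mul]
      have := neg_abs_le (∑ k, μ k * f k * w k)
      linarith
    -- quadratic term bound
    have hsq : β * |s| - 1 ≤ (∑ k, μ k * u k)^2 := by
      have hMs : (∑ k, μ k * u k) = M * s := by
        rw [hs]; field_simp
      rw [hMs, mul_pow]
      rcases le_total (|s|) 1 with h | h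
      · have h1 : β * |s| ≤ 1 := by
          have : β ≤ 1 := min_le_left _ _
          nlinarith [abs_nonneg s]
        nlinarith [sq_nonneg (M * s)]
      · have h1 : M^2 * |s| ≤ M^2 * s^2 := by
          apply mul_le_mul_of_nonneg_left _ (sq_nonneg M)
          rw [← sq_abs]
          nlinarith [abs_nonneg s]
        have h2 : β * |s| ≤ M^2 * |s| := by
          apply mul_le_mul_of_nonneg_right (min_le_right _ _) (abs_nonneg s)
        nlinarith
    -- norm bound
    have hnorm : ‖u‖ ≤ |s| + W := by
      apply norm_le_of_coords (by positivity)
      intro k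
      have : u k = w k + s := by rw [hw]; ring
      rw [this]
      calc |w k + s| ≤ |w k| + |s| := abs_add_le _ _
        _ ≤ |s| + W := by linarith [hi₀ k]
    have hW1 : (F₁ + 1) * W ≤ (C₀/p) * W ^ p + B₂ := hB₂ W hWnn
    have hβW : β * W ≤ W := by
      nlinarith [min_le_left 1 (M^2), hWnn]
    have hβs : β * ‖u‖ ≤ β * (|s| + W) := mul_le_mul_of_nonneg_left hnorm hβ.le
    nlinarith
  -- existence of a critical point
  obtain ⟨v, hcrit, hmin⟩ := exists_critical (μ := μ) hp hA hωsymm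
    (fun k t => μ k * f k * t) (fun k t => μ k * f k)
    (fun k t => by simpa using (hasDerivAt_id t).const_mul (μ k * f k)) 1 hβ hbd
  -- the minimizer has zero mean
  set S : ℝ := ∑ k, μ k * v k with hS
  have hSzero : S = 0 := by
    set v' : V → ℝ := fun k => v k - S / M with hv'
    have hEp' : Ep p A ω v' = Ep p A ω v := by
      have : v' = fun k => v k + (-(S/M)) := by funext k; rw [hv']; ring
      rw [this, Ep_add_const]
    have hlin' : (∑ k, μ k * f k * v' k) = ∑ k, μ k * f k * v k := by
      have : ∀ k, μ k * f k * v' k = μ k * f k * v k - (μ k * f k) * (S/M) := by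
        intro k; rw [hv']; ring
      rw [Finset.sum_congr rfl (fun k _ => this k), Finset.sum_sub_distrib,
        ← Finset.sum_mul, hf, zero_mul, sub_zero]
    have hmean' : (∑ k, μ k * v' k) = 0 := by
      have : ∀ k, μ k * v' k = μ k * v k - μ k * (S/M) := by
        intro k; rw [hv']; ring
      rw [Finset.sum_congr rfl (fun k _ => this k), Finset.sum_sub_distrib,
        ← Finset.sum_mul, ← hS]
      field_simp
      rw [← hMdef]; ring
    have h1 := hmin v'
    rw [hEp', hlin', hmean'] at h1
    have h2 : S^2 ≤ 0 := by nlinarith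
    have h3 : S^2 = 0 := le_antisymm h2 (sq_nonneg S)
    exact pow_eq_zero_iff two_ne_zero |>.mp h3
  refine ⟨v, fun i => ?_⟩
  have hcr := hcrit i
  rw [hSzero] at hcr
  have hplap := mu_pLap (p := p) (A := A) (ω := ω) hμ v i
  have hfin : μ i * pLap p A ω μ v i = μ i * f i := by
    rw [hplap, hcr]; ring
  exact mul_left_cancel₀ (ne_of_gt (hμ i)) hfin
end E
section G
variable {V : Type*} [Fintype V] [Nonempty V] [DecidableEq V] {p : ℝ} {A : V → V → Prop}
  [DecidableRel A] {ω : V → V → ℝ} {μ : V → ℝ}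

lemma comparison_term (hp : 1 < p) (ui uj bi bj : ℝ) :
    (Phi p (uj - ui) - Phi p (bj - bi)) * (max (ui - bi) 0 - max (uj - bj) 0) ≤ 0 := by
  rcases le_total (ui - bi) (uj - bj) with hle | hle
  · apply mul_nonpos_of_nonneg_of_nonpos
    · have h1 : bj - bi ≤ uj - ui := by linarith
      have := Phi_mono hp h1
      linarith
    · have := max_le_max hle (le_refl (0:ℝ))
      linarith
  · apply mul_nonpos_of_nonpos_of_nonneg
    · have h1 : uj - ui ≤ bj - bi := by linarith
      have := Phi_mono hp h1
      linarith
    · have := max_le_max hle (le_refl (0:ℝ))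
      linarith

lemma exists_solution (hp : 1 < p) (hA : Symmetric A) (hωsymm : ∀ i j, ω i j = ω j i)
    (hωpos : ∀ i j, A i j → 0 < ω i j) (hμ : ∀ i, 0 < μ i)
    (hconn : ∀ i j : V, Relation.ReflTransGen A i j)
    (h : V → ℝ) {c : ℝ} (hc : c < 0) (b : V → ℝ)
    (hb : ∀ i, pLap p A ω μ b i < c - h i * Real.exp (b i)) :
    ∃ u : V → ℝ, ∀ i, pLap p A ω μ u i = c - h i * Real.exp (u i) := by
  classical
  obtain ⟨C₀, hC₀, hpoin⟩ := poincare (μ := μ) hp hA hωsymm hωpos hμ hconn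
  have hM : (0:ℝ) < ∑ j, μ j := Finset.sum_pos (fun j _ => hμ j) Finset.univ_nonempty
  set M : ℝ := ∑ j, μ j with hMdef
  set α : ℝ := ∑ k, μ k * (c - h k * Real.exp (b k)) with hα
  have hαpos : 0 < α := by
    have h0 : ∑ k, Dd p A ω b k = 0 := sum_Dd_zero hA hωsymm b
    have hlt : ∀ k ∈ Finset.univ, Dd p A ω b k < μ k * (c - h k * Real.exp (b k)) := by
      intro k _
      rw [← mu_pLap hμ b k]
      exact mul_lt_mul_of_pos_left (hb k) (hμ k)
    have := Finset.sum_lt_sum_of_nonempty Finset.univ_nonempty hlt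
    rw [h0] at this
    exact this
  have hαeq : α = c * M - ∑ k, μ k * h k * Real.exp (b k) := by
    rw [hα, hMdef]
    rw [Finset.sum_congr rfl (fun k _ => (by ring :
      μ k * (c - h k * Real.exp (b k)) = c * μ k - μ k * h k * Real.exp (b k)))]
    rw [Finset.sum_sub_distrib, ← Finset.mul_sum]
  -- maximum of b and 0
  set bm : ℝ := (Finset.univ.sup' Finset.univ_nonempty b) ⊔ 0 with hbm
  have hbmle : ∀ k, b k ≤ bm := fun k =>
    le_trans (Finset.le_sup' b (Finset.mem_univ k)) le_sup_left
  have hbm0 : (0:ℝ) ≤ bm := le_sup_right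
  -- constants
  set C₁ : ℝ := ∑ k, μ k * |h k| with hC₁
  have hC₁nn : 0 ≤ C₁ := Finset.sum_nonneg fun k _ => mul_nonneg (hμ k).le (abs_nonneg _)
  set Hg : ℝ := ∑ k, μ k * |h k| * Real.exp (b k) with hHg
  have hHgnn : 0 ≤ Hg := Finset.sum_nonneg fun k _ =>
    mul_nonneg (mul_nonneg (hμ k).le (abs_nonneg _)) (Real.exp_pos _).le
  have hHgabs : ∀ s : ℝ, |∑ k, μ k * h k * Real.exp (b k)| ≤ Hg := by
    intro s
    calc |∑ k, μ k * h k * Real.exp (b k)| ≤ ∑ k, |μ k * h k * Real.exp (b k)| :=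
          Finset.abs_sum_le_sum_abs _ _
      _ = Hg := by
          rw [hHg]
          apply Finset.sum_congr rfl
          intro k _
          rw [abs_mul, abs_mul, abs_of_pos (hμ k), abs_of_pos (Real.exp_pos _)]
  set C₂ : ℝ := (-c * M + Hg) * bm with hC₂
  have hC₂nn : 0 ≤ C₂ := mul_nonneg (by nlinarith) hbm0
  set β₁ : ℝ := min (-c * M) α with hβ₁
  have hβ₁pos : 0 < β₁ := lt_min (by nlinarith) hαpos
  set L : ℝ := -c * M + Hg with hL
  have hLnn : 0 ≤ L := by nlinarith
  set B₁ : ℝ := C₁ + C₂ + α * bm with hB₁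
  -- the one-dimensional comparison function ψ
  set ψ : ℝ → ℝ := fun s => c * M * s - ∑ k, μ k * h k * Eb (b k) s with hψ
  -- middle region bound
  have hψmid : ∀ s : ℝ, 0 ≤ s → s ≤ bm → -C₂ ≤ ψ s := by
    intro s hs hsb
    have hsum : -(Hg * s) ≤ -∑ k, μ k * h k * Eb (b k) s := by
      rw [neg_le_neg_iff]
      calc (∑ k, μ k * h k * Eb (b k) s) ≤ ∑ k, μ k * |h k| * Real.exp (b k) * s := by
            apply Finset.sum_le_sum
            intro k _
            have h1 : |μ k * h k * Eb (b k) s| ≤ μ k * |h k| * (Real.exp (b k) * s) := by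
              rw [abs_mul, abs_mul, abs_of_pos (hμ k)]
              apply mul_le_mul_of_nonneg_left _ (mul_nonneg (hμ k).le (abs_nonneg _))
              obtain ⟨ha, hb2⟩ := Eb_nonneg_le (b k) hs
              rw [abs_of_nonneg ha]; exact hb2
            have := (abs_le.mp h1).1
            have h2 := (abs_le.mp h1).2
            nlinarith [le_abs_self (μ k * h k * Eb (b k) s)]
        _ = Hg * s := by rw [hHg, Finset.sum_mul]
    have hcs : c * M * bm ≤ c * M * s := by
      apply mul_le_mul_of_nonpos_left hsb
      nlinarith
    have hHgs : Hg * s ≤ Hg * bm := mul_le_mul_of_nonneg_left hsb hHgnn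
    rw [hψ, hC₂]
    simp only
    nlinarith
  -- global lower bound for ψ
  have hψbelow : ∀ s : ℝ, β₁ * |s| - B₁ ≤ ψ s := by
    intro s
    rcases le_total s 0 with hs | hs
    · have hsum : -C₁ ≤ -∑ k, μ k * h k * Eb (b k) s := by
        rw [neg_le_neg_iff, hC₁]
        calc (∑ k, μ k * h k * Eb (b k) s) ≤ ∑ k, μ k * |h k| := by
              apply Finset.sum_le_sum
              intro k _
              have h1 : |μ k * h k * Eb (b k) s| ≤ μ k * |h k| * 1 := by
                rw [abs_mul, abs_mul, abs_of_pos (hμ k)]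
                exact mul_le_mul_of_nonneg_left (Eb_abs_le_one (b k) hs)
                  (mul_nonneg (hμ k).le (abs_nonneg _))
              rw [mul_one] at h1
              linarith [le_abs_self (μ k * h k * Eb (b k) s), (abs_le.mp h1).2]
          _ = ∑ k, μ k * |h k| := rfl
      have h1 : β₁ * |s| ≤ -c * M * |s| :=
        mul_le_mul_of_nonneg_right (min_le_left _ _) (abs_nonneg s)
      have h2 : -c * M * |s| = c * M * s := by
        rw [abs_of_nonpos hs]; ring
      have h3 : ψ s = c * M * s + -∑ k, μ k * h k * Eb (b k) s := by rw [hψ]; ring_nf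
      rw [hB₁]
      nlinarith [mul_nonneg hαpos.le hbm0]
    · rcases le_total s bm with hsb | hsb
      · have hm := hψmid s hs hsb
        have h1 : β₁ * |s| ≤ α * bm := by
          rw [abs_of_nonneg hs]
          calc β₁ * s ≤ α * s := mul_le_mul_of_nonneg_right (min_le_right _ _) hs
            _ ≤ α * bm := mul_le_mul_of_nonneg_left hsb hαpos.le
        rw [hB₁]
        linarith
      · have hslope : ψ s = ψ bm + α * (s - bm) := by
          have hEbs : ∀ k ∈ Finset.univ, μ k * h k * Eb (b k) s
              = μ k * h k * Eb (b k) bm + (μ k * h k * Real.exp (b k)) * (s - bm) := by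
            intro k _
            rw [Eb_slope_above (b k) (hbmle k) hsb]
            ring
          rw [hψ]
          simp only
          rw [Finset.sum_congr rfl hEbs, Finset.sum_add_distrib, ← Finset.sum_mul, hαeq]
          ring
        have hm := hψmid bm hbm0 (le_refl bm)
        have h2 : β₁ * s ≤ α * s := mul_le_mul_of_nonneg_right (min_le_right _ _) hs
        have h3 : β₁ * |s| = β₁ * s := by rw [abs_of_nonneg hs]
        rw [hB₁, h3, hslope]
        linarith [mul_le_mul_of_nonneg_left hsb hαpos.le, hm, h2, hC₁nn]
  -- coercivity bound
  obtain ⟨B₂, hB₂nn, hB₂⟩ := rpow_linear_bound hp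
    (by positivity : (0:ℝ) < C₀ / p) (by linarith : (0:ℝ) ≤ L + β₁)
  have hbd : ∀ u : V → ℝ, β₁ * ‖u‖ - (B₁ + B₂) ≤
      (1/p) * Ep p A ω u + (∑ k, μ k * (c * u k - h k * Eb (b k) (u k)))
        + 0 * (∑ k, μ k * u k)^2 := by
    intro u
    rw [zero_mul, add_zero]
    set s : ℝ := (∑ j, μ j * u j) / M with hs
    set w : V → ℝ := fun k => u k - s with hw
    obtain ⟨i₀, hi₀⟩ := exists_sup_coord w
    set W : ℝ := |w i₀| with hWdef
    have hWnn : (0:ℝ) ≤ W := abs_nonneg _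
    have hEp : (C₀/p) * W ^ p ≤ (1/p) * Ep p A ω u := by
      have hpo := hpoin u i₀
      calc (C₀/p) * W ^ p = (1/p) * (C₀ * |u i₀ - (∑ j, μ j * u j)/M| ^ p) := by
            rw [hWdef, hw]; ring
        _ ≤ (1/p) * Ep p A ω u := by
            apply mul_le_mul_of_nonneg_left hpo (by positivity)
    -- lower bound for the potential sum
    have hsumF : ψ s - L * W ≤ ∑ k, μ k * (c * u k - h k * Eb (b k) (u k)) := by
      have hkey : ∀ k ∈ Finset.univ,
          μ k * c * s - μ k * h k * Eb (b k) s - μ k * (-c) * W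
            - μ k * |h k| * Real.exp (b k) * W
          ≤ μ k * (c * u k - h k * Eb (b k) (u k)) := by
        intro k _
        have hwk : |w k| ≤ W := hi₀ k
        have hA1 : -((-c) * W) ≤ c * w k := by
          have habs : |c * w k| ≤ (-c) * W := by
            rw [abs_mul, abs_of_neg hc]
            exact mul_le_mul_of_nonneg_left hwk (by linarith)
          linarith [(abs_le.mp habs).1]
        have hA2 : -(|h k| * Real.exp (b k) * W) ≤ -(h k * (Eb (b k) (u k) - Eb (b k) s)) := by
          have hlip := Eb_lipschitz (b k) s (u k)
          have husk : |u k - s| = |w k| := by rw [hw]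
          have habs : |h k * (Eb (b k) (u k) - Eb (b k) s)| ≤ |h k| * Real.exp (b k) * W := by
            rw [abs_mul]
            calc |h k| * |Eb (b k) (u k) - Eb (b k) s| ≤ |h k| * (Real.exp (b k) * |u k - s|) :=
                  mul_le_mul_of_nonneg_left hlip (abs_nonneg _)
              _ ≤ |h k| * (Real.exp (b k) * W) := by
                  apply mul_le_mul_of_nonneg_left _ (abs_nonneg _)
                  apply mul_le_mul_of_nonneg_left _ (Real.exp_pos _).le
                  rw [husk]; exact hwk
              _ = |h k| * Real.exp (b k) * W := by ring
          linarith [(abs_le.mp habs).2]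
        have hexp : μ k * (c * u k - h k * Eb (b k) (u k))
            = μ k * c * s + μ k * (c * w k) - μ k * h k * Eb (b k) s
              + μ k * (-(h k * (Eb (b k) (u k) - Eb (b k) s))) := by
          rw [hw]; ring
        rw [hexp]
        have hm1 := mul_le_mul_of_nonneg_left hA1 (hμ k).le
        have hm2 := mul_le_mul_of_nonneg_left hA2 (hμ k).le
        linarith [hm1, hm2]
      have hsum0 : ∑ k, (μ k * c * s - μ k * h k * Eb (b k) s - μ k * (-c) * W
            - μ k * |h k| * Real.exp (b k) * W) = ψ s - L * W := by
        rw [Finset.sum_congr rfl (fun k _ => (by ring :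
          μ k * c * s - μ k * h k * Eb (b k) s - μ k * (-c) * W
            - μ k * |h k| * Real.exp (b k) * W
          = (c * s) * μ k - μ k * h k * Eb (b k) s - ((-c) * W) * μ k
            - (μ k * |h k| * Real.exp (b k)) * W))]
        rw [Finset.sum_sub_distrib, Finset.sum_sub_distrib, Finset.sum_sub_distrib,
          ← Finset.mul_sum, ← Finset.mul_sum, ← Finset.sum_mul, ← hMdef, ← hHg, hψ, hL]
        ring
      calc ψ s - L * W = ∑ k, (μ k * c * s - μ k * h k * Eb (b k) s - μ k * (-c) * W
            - μ k * |h k| * Real.exp (b k) * W) := hsum0.symm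
        _ ≤ ∑ k, μ k * (c * u k - h k * Eb (b k) (u k)) := Finset.sum_le_sum hkey
    have hψs := hψbelow s
    have hW1 : (L + β₁) * W ≤ (C₀/p) * W ^ p + B₂ := hB₂ W hWnn
    have hnorm : ‖u‖ ≤ |s| + W := by
      apply norm_le_of_coords (by positivity)
      intro k
      have hk : u k = w k + s := by rw [hw]; ring
      rw [hk]
      calc |w k + s| ≤ |w k| + |s| := abs_add_le _ _
        _ ≤ |s| + W := by linarith [hi₀ k]
    have hβs : β₁ * ‖u‖ ≤ β₁ * (|s| + W) := mul_le_mul_of_nonneg_left hnorm hβ₁pos.le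
    nlinarith
  -- the critical point
  have hder : ∀ k t, HasDerivAt (fun t => μ k * (c * t - h k * Eb (b k) t))
      (μ k * (c - h k * Real.exp (min t (b k)))) t := by
    intro k t
    have h1 : HasDerivAt (fun t : ℝ => c * t) c t := by
      simpa using (hasDerivAt_id t).const_mul c
    have h2 : HasDerivAt (fun t => h k * Eb (b k) t) (h k * Real.exp (min t (b k))) t :=
      (hasDerivAt_Eb (b k) t).const_mul (h k)
    exact (h1.sub h2).const_mul (μ k)
  obtain ⟨u, hcrit, -⟩ := exists_critical (μ := μ) hp hA hωsymm
    (fun k t => μ k * (c * t - h k * Eb (b k) t))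
    (fun k t => μ k * (c - h k * Real.exp (min t (b k))))
    hder 0 hβ₁pos hbd
  have hDu : ∀ i, Dd p A ω u i = μ i * (c - h i * Real.exp (min (u i) (b i))) := by
    intro i
    have := hcrit i
    simpa using this
  -- comparison with the strict upper solution
  have hle : ∀ i, u i ≤ b i := by
    by_contra hcon
    push_neg at hcon
    obtain ⟨i₀, hi₀⟩ := hcon
    set w : V → ℝ := fun i => max (u i - b i) 0 with hwdef
    have hterm : ∀ i ∈ Finset.univ, 0 ≤ (Dd p A ω u i - Dd p A ω b i) * w i := by
      intro i _
      rcases le_or_gt (u i) (b i) with hub | hub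
      · have hwi : w i = 0 := by rw [hwdef]; simp; linarith
        rw [hwi, mul_zero]
      · have hwi : 0 < w i := by rw [hwdef]; simp; linarith
        have hmin : min (u i) (b i) = b i := min_eq_right hub.le
        have hDgt : 0 < Dd p A ω u i - Dd p A ω b i := by
          rw [hDu i, hmin, ← mu_pLap hμ b i]
          have := mul_lt_mul_of_pos_left (hb i) (hμ i)
          linarith
        positivity
    have hpos : 0 < ∑ i, (Dd p A ω u i - Dd p A ω b i) * w i := by
      apply Finset.sum_pos' hterm
      refine ⟨i₀, Finset.mem_univ _, ?_⟩
      have hwi : 0 < w i₀ := by rw [hwdef]; simp; linarith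
      have hmin : min (u i₀) (b i₀) = b i₀ := min_eq_right hi₀.le
      have hDgt : 0 < Dd p A ω u i₀ - Dd p A ω b i₀ := by
        rw [hDu i₀, hmin, ← mu_pLap hμ b i₀]
        have := mul_lt_mul_of_pos_left (hb i₀) (hμ i₀)
        linarith
      positivity
    have hT : ∑ i, (Dd p A ω u i - Dd p A ω b i) * w i
        = (1/2) * ∑ i, ∑ j, (if A i j then
            ω i j * ((Phi p (u j - u i) - Phi p (b j - b i)) * (w i - w j)) else 0) := by
      have hsplit : ∑ i, (Dd p A ω u i - Dd p A ω b i) * w i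
          = (∑ i, Dd p A ω u i * w i) - ∑ i, Dd p A ω b i * w i := by
        rw [← Finset.sum_sub_distrib]
        apply Finset.sum_congr rfl; intro i _; ring
      rw [hsplit, sum_Dd_mul hA hωsymm u w, sum_Dd_mul hA hωsymm b w, ← mul_sub]
      congr 1
      rw [← Finset.sum_sub_distrib]
      apply Finset.sum_congr rfl; intro i _
      rw [← Finset.sum_sub_distrib]
      apply Finset.sum_congr rfl; intro j _
      split_ifs <;> ring
    have hnonpos : (∑ i, ∑ j, (if A i j then
        ω i j * ((Phi p (u j - u i) - Phi p (b j - b i)) * (w i - w j)) else 0)) ≤ 0 := by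
      apply Finset.sum_nonpos; intro i _
      apply Finset.sum_nonpos; intro j _
      split_ifs with hij
      · apply mul_nonpos_of_nonneg_of_nonpos (hωpos i j hij).le
        have := comparison_term hp (u i) (u j) (b i) (b j)
        rw [hwdef]
        exact this
      · exact le_refl 0
    rw [hT] at hpos
    nlinarith
  -- conclusion
  refine ⟨u, fun i => ?_⟩
  have hmin : min (u i) (b i) = u i := min_eq_left (hle i)
  have hDui := hDu i
  rw [hmin] at hDui
  have hplap := mu_pLap (p := p) (A := A) (ω := ω) hμ u i
  have hfin : μ i * pLap p A ω μ u i = μ i * (c - h i * Real.exp (u i)) := by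
    rw [hplap, hDui]
  exact mul_left_cancel₀ (ne_of_gt (hμ i)) hfin

end G
section H
variable {V : Type*} [Fintype V] [Nonempty V] [DecidableEq V] {p : ℝ} {A : V → V → Prop}
  [DecidableRel A] {ω : V → V → ℝ} {μ : V → ℝ}

lemma pLap_scale (hp : 1 < p) {δ : ℝ} (hδ : 0 < δ) (v : V → ℝ) (cst : ℝ) (i : V) :
    pLap p A ω μ (fun j => δ * v j + cst) i = δ ^ (p - 1) * pLap p A ω μ v i := by
  unfold pLap
  have hterm : ∀ j, (if A i j then
        ω i j * |(δ * v j + cst) - (δ * v i + cst)| ^ (p-2) * ((δ * v j + cst) - (δ * v i + cst))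
      else 0)
      = δ ^ (p-1) * (if A i j then ω i j * |v j - v i| ^ (p-2) * (v j - v i) else 0) := by
    intro j
    split_ifs
    · have hd : (δ * v j + cst) - (δ * v i + cst) = δ * (v j - v i) := by ring
      rw [hd]
      have hph := Phi_smul hp hδ (v j - v i)
      unfold Phi at hph
      calc ω i j * |δ * (v j - v i)| ^ (p-2) * (δ * (v j - v i))
          = ω i j * (|δ * (v j - v i)| ^ (p-2) * (δ * (v j - v i))) := by ring
        _ = ω i j * (δ ^ (p-1) * (|v j - v i| ^ (p-2) * (v j - v i))) := by rw [hph]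
        _ = δ ^ (p-1) * (ω i j * |v j - v i| ^ (p-2) * (v j - v i)) := by ring
    · rw [mul_zero]
  rw [Finset.sum_congr rfl (fun j _ => hterm j), ← Finset.mul_sum]
  ring

lemma upper_solution (hp : 1 < p) (hA : Symmetric A) (hωsymm : ∀ i j, ω i j = ω j i)
    (hωpos : ∀ i j, A i j → 0 < ω i j) (hμ : ∀ i, 0 < μ i)
    (hconn : ∀ i j : V, Relation.ReflTransGen A i j)
    (h : V → ℝ) (hbar : (∑ i, μ i * h i) / (∑ i, μ i) < 0) :
    ∃ Ch > (0:ℝ), ∃ b : V → ℝ, ∀ i, pLap p A ω μ b i + h i * Real.exp (b i) ≤ -Ch := by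
  classical
  have hM : (0:ℝ) < ∑ j, μ j := Finset.sum_pos (fun j _ => hμ j) Finset.univ_nonempty
  set m : ℝ := (∑ i, μ i * h i) / (∑ i, μ i) with hm
  have hm0 : m < 0 := hbar
  -- solve  pLap v = m - h
  have hf0 : ∑ i, μ i * (m - h i) = 0 := by
    rw [Finset.sum_congr rfl (fun i _ => (by ring : μ i * (m - h i) = m * μ i - μ i * h i)),
      Finset.sum_sub_distrib, ← Finset.mul_sum, hm]
    field_simp
    ring
  obtain ⟨v, hv⟩ := solve_meanzero hp hA hωsymm hωpos hμ hconn (fun i => m - h i) hf0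
  -- bounds
  obtain ⟨i₁, hi₁⟩ := exists_sup_coord v
  set V₀ : ℝ := |v i₁| + 1 with hV₀
  have hV₀1 : (1:ℝ) ≤ V₀ := by have := abs_nonneg (v i₁); linarith
  have hV₀pos : (0:ℝ) < V₀ := by linarith
  have hvB : ∀ k, |v k| ≤ V₀ := fun k => by have := hi₁ k; linarith
  obtain ⟨i₂, hi₂⟩ := exists_sup_coord h
  set Hm : ℝ := |h i₂| + 1 with hHm
  have hHmpos : (0:ℝ) < Hm := by have := abs_nonneg (h i₂); linarith
  have hhB : ∀ k, |h k| ≤ Hm := fun k => by have := hi₂ k; linarith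
  -- scaling parameter
  set δ : ℝ := min (1/V₀) ((-m) / (4 * Hm * V₀)) with hδdef
  have hδpos : 0 < δ := lt_min (by positivity) (by
    apply div_pos (by linarith) (by positivity))
  have hδV₀ : δ * V₀ ≤ 1 := by
    have h1 : δ ≤ 1/V₀ := min_le_left _ _
    calc δ * V₀ ≤ (1/V₀) * V₀ := mul_le_mul_of_nonneg_right h1 hV₀pos.le
      _ = 1 := by field_simp
  have hδm : 2 * Hm * (δ * V₀) ≤ -m / 2 := by
    have h1 : δ ≤ (-m) / (4 * Hm * V₀) := min_le_right _ _
    have h2 : 2 * Hm * V₀ * δ ≤ 2 * Hm * V₀ * ((-m) / (4 * Hm * V₀)) :=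
      mul_le_mul_of_nonneg_left h1 (by positivity)
    have h3 : 2 * Hm * V₀ * ((-m) / (4 * Hm * V₀)) = -m / 2 := by
      field_simp
      ring
    nlinarith
  -- the upper solution
  set b : V → ℝ := fun i => δ * v i + (p - 1) * Real.log δ with hb
  have hexp : ∀ i, Real.exp (b i) = δ ^ (p-1) * Real.exp (δ * v i) := by
    intro i
    rw [hb]
    simp only
    rw [Real.exp_add, Real.rpow_def_of_pos hδpos]
    rw [mul_comm (p-1) (Real.log δ)]
    ring
  have hδp : (0:ℝ) < δ ^ (p-1) := Real.rpow_pos_of_pos hδpos _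
  have hmneg : (0:ℝ) < -m := by linarith
  refine ⟨δ ^ (p-1) * (-m) / 2, by positivity, b, ?_⟩
  intro i
  have hpl : pLap p A ω μ b i = δ ^ (p-1) * (m - h i) := by
    rw [hb]
    rw [pLap_scale hp hδpos v ((p-1) * Real.log δ) i, hv i]
  rw [hpl, hexp i]
  -- pointwise estimate
  have hkey : h i * Real.exp (δ * v i) - h i ≤ -m / 2 := by
    have habs1 : |δ * v i| ≤ 1 := by
      rw [abs_mul, abs_of_pos hδpos]
      calc δ * |v i| ≤ δ * V₀ := mul_le_mul_of_nonneg_left (hvB i) hδpos.le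
        _ ≤ 1 := hδV₀
    have hexp1 : |Real.exp (δ * v i) - 1| ≤ 2 * |δ * v i| := Real.abs_exp_sub_one_le habs1
    have h1 : |h i * (Real.exp (δ * v i) - 1)| ≤ Hm * (2 * (δ * V₀)) := by
      rw [abs_mul]
      calc |h i| * |Real.exp (δ * v i) - 1| ≤ Hm * |Real.exp (δ * v i) - 1| :=
            mul_le_mul_of_nonneg_right (hhB i) (abs_nonneg _)
        _ ≤ Hm * (2 * |δ * v i|) := mul_le_mul_of_nonneg_left hexp1 hHmpos.le
        _ ≤ Hm * (2 * (δ * V₀)) := by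
            apply mul_le_mul_of_nonneg_left _ hHmpos.le
            rw [abs_mul, abs_of_pos hδpos]
            have := mul_le_mul_of_nonneg_left (hvB i) hδpos.le
            linarith
    have h2 := (abs_le.mp h1).2
    have h3 : Hm * (2 * (δ * V₀)) = 2 * Hm * (δ * V₀) := by ring
    have h5 : h i * Real.exp (δ * v i) - h i ≤ 2 * Hm * (δ * V₀) := by
      have h4 : h i * Real.exp (δ * v i) - h i = h i * (Real.exp (δ * v i) - 1) := by ring
      rw [h4]
      linarith
    exact le_trans h5 hδm
  have hfin : δ ^ (p-1) * (m - h i) + h i * (δ ^ (p-1) * Real.exp (δ * v i))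
      = δ ^ (p-1) * (m + (h i * Real.exp (δ * v i) - h i)) := by ring
  rw [hfin]
  calc δ ^ (p-1) * (m + (h i * Real.exp (δ * v i) - h i))
      ≤ δ ^ (p-1) * (m + (-m / 2)) := by
        apply mul_le_mul_of_nonneg_left _ hδp.le
        linarith
    _ = -(δ ^ (p-1) * (-m) / 2) := by ring

end H

/-- if `h̄ < 0` there is `C_h > 0` so that for all `-C_h ≤ c < 0` the equation
`Δ_p u = c - h e^u` has an upper solution; consequently there is `c₋(h) ∈ [-∞, 0)` such that
the equation has a solution for every `c ∈ (c₋(h), 0)`. -/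
theorem stmt19 {V : Type*} [Fintype V] [Nonempty V] (p : ℝ) (hp : 1 < p)
    (A : V → V → Prop) [DecidableRel A] (hA : Symmetric A)
    (ω : V → V → ℝ) (hωsymm : ∀ i j, ω i j = ω j i) (hωpos : ∀ i j, A i j → 0 < ω i j)
    (μ : V → ℝ) (hμ : ∀ i, 0 < μ i)
    (hconn : ∀ i j : V, Relation.ReflTransGen A i j) (h : V → ℝ) (hbar : (∑ i, μ i * h i) / (∑ i, μ i) < 0) :
    (∃ Ch > (0:ℝ), ∀ c : ℝ, -Ch ≤ c → c < 0 →
      ∃ up : V → ℝ, ∀ i, pLap p A ω μ up i - c + h i * Real.exp (up i) ≤ 0) ∧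
    ∃ cm : EReal, cm < 0 ∧ ∀ c : ℝ, cm < (c : EReal) → c < 0 →
      ∃ u : V → ℝ, ∀ i, pLap p A ω μ u i = c - h i * Real.exp (u i) := by
  classical
  obtain ⟨Ch, hCh, b, hbsol⟩ := upper_solution hp hA hωsymm hωpos hμ hconn h hbar
  constructor
  · refine ⟨Ch, hCh, ?_⟩
    intro c hc1 hc2
    refine ⟨b, fun i => ?_⟩
    have := hbsol i
    linarith
  · refine ⟨((-Ch : ℝ) : EReal), ?_, ?_⟩
    · have : (-Ch : ℝ) < (0:ℝ) := by linarith
      exact_mod_cast this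
    · intro c hc1 hc2
      have hc1' : -Ch < c := by exact_mod_cast hc1
      apply exists_solution hp hA hωsymm hωpos hμ hconn h hc2 b
      intro i
      have := hbsol i
      linarith
end
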